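/- arXiv:0912.1663 — 4 statements merged into one kernel-verified Lean document; each statement's English description precedes it below -/
import Mathlib

section
/- Let q be a symmetric probability kernel on ℤ^d and let φ(k) = ∑_{x∈ℤ^d} q(x) cos⟨k, x⟩ for k ∈ ℝ^d. Then for all a, b > 0 and every k ∈ ℝ^d: ∫_{[−π,π]^d} e^{−b(1−φ(u)) − a(1−φ(k−u))} du ≥ e^{−a(1−φ(k))} ∫_{[−π,π]^d} e^{−(a+b)(1−φ(u))} du. -/
open scoped BigOperators
open MeasureTheory

/-- The characteristic function `φ(k) = ∑_{x∈ℤ^d} q(x) cos⟨k,x⟩` of a symmetric kernel. -/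
noncomputable def charFn {d : ℕ} (q : (Fin d → ℤ) → ℝ) (k : Fin d → ℝ) : ℝ :=
  ∑' x : Fin d → ℤ, q x * Real.cos (∑ i, k i * (x i : ℝ))

lemma summable_of_tsum_one {d : ℕ} {q : (Fin d → ℤ) → ℝ}
    (hq1 : ∑' x : Fin d → ℤ, q x = 1) : Summable q := by
  by_contra h
  rw [tsum_eq_zero_of_not_summable h] at hq1
  norm_num at hq1

lemma summable_qcos {d : ℕ} {q : (Fin d → ℤ) → ℝ} (hq0 : ∀ x, 0 ≤ q x)
    (hqs : Summable q) (t : (Fin d → ℤ) → ℝ) :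
    Summable (fun x => q x * Real.cos (t x)) := by
  apply Summable.of_norm_bounded hqs
  intro x
  rw [norm_mul, Real.norm_eq_abs, Real.norm_eq_abs, abs_of_nonneg (hq0 x)]
  calc q x * |Real.cos (t x)| ≤ q x * 1 :=
        mul_le_mul_of_nonneg_left (Real.abs_cos_le_one _) (hq0 x)
    _ = q x := mul_one _

lemma charFn_eq {d : ℕ} (q : (Fin d → ℤ) → ℝ) (k : Fin d → ℝ) :
    charFn q k = ∑' x : Fin d → ℤ, q x * Real.cos (∑ i, k i * (x i : ℝ)) := rfl

lemma charFn_neg {d : ℕ} (q : (Fin d → ℤ) → ℝ) (k : Fin d → ℝ) :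
    charFn q (-k) = charFn q k := by
  unfold charFn
  congr 1
  funext x
  congr 1
  rw [show (∑ i, (-k) i * (x i : ℝ)) = -(∑ i, k i * (x i : ℝ)) by
    rw [← Finset.sum_neg_distrib]; exact Finset.sum_congr rfl fun i _ => by
      simp [neg_mul]]
  exact Real.cos_neg _

lemma continuous_charFn {d : ℕ} {q : (Fin d → ℤ) → ℝ} (hq0 : ∀ x, 0 ≤ q x)
    (hqs : Summable q) : Continuous (charFn q) := by
  have : Continuous fun k : Fin d → ℝ =>
      ∑' x : Fin d → ℤ, q x * Real.cos (∑ i, k i * (x i : ℝ)) := by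
    apply continuous_tsum (u := q) ?_ hqs ?_
    · intro x
      exact continuous_const.mul ((Real.continuous_cos).comp
        (continuous_finset_sum _ fun i _ => (continuous_apply i).mul continuous_const))
    · intro x k
      rw [norm_mul, Real.norm_eq_abs, Real.norm_eq_abs, abs_of_nonneg (hq0 x)]
      calc q x * |Real.cos _| ≤ q x * 1 :=
            mul_le_mul_of_nonneg_left (Real.abs_cos_le_one _) (hq0 x)
        _ = q x := mul_one _
  exact this

/-- Key inequality: `2φ(k)+2φ(u)-2 ≤ φ(k-u)+φ(k+u)`. -/
lemma charFn_key {d : ℕ} {q : (Fin d → ℤ) → ℝ} (hq0 : ∀ x, 0 ≤ q x)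
    (hq1 : ∑' x : Fin d → ℤ, q x = 1) (k u : Fin d → ℝ) :
    2 * charFn q k + 2 * charFn q u - 2 ≤ charFn q (k - u) + charFn q (k + u) := by
  have hqs : Summable q := summable_of_tsum_one hq1
  set A : (Fin d → ℤ) → ℝ := fun x => ∑ i, k i * (x i : ℝ) with hA
  set B : (Fin d → ℤ) → ℝ := fun x => ∑ i, u i * (x i : ℝ) with hB
  have hsub : charFn q (k - u) = ∑' x, q x * Real.cos (A x - B x) := by
    unfold charFn; congr 1; funext x; congr 2
    simp [hA, hB, sub_mul, Finset.sum_sub_distrib]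
  have hadd : charFn q (k + u) = ∑' x, q x * Real.cos (A x + B x) := by
    unfold charFn; congr 1; funext x; congr 2
    simp [hA, hB, add_mul, Finset.sum_add_distrib]
  have S1 := summable_qcos hq0 hqs (fun x => A x - B x)
  have S2 := summable_qcos hq0 hqs (fun x => A x + B x)
  have S3 := summable_qcos hq0 hqs A
  have S4 := summable_qcos hq0 hqs B
  have hpt : ∀ x, q x * Real.cos (A x - B x) + q x * Real.cos (A x + B x)
      = 2 * (q x * ((1 - Real.cos (A x)) * (1 - Real.cos (B x))))
        - 2 * q x + 2 * (q x * Real.cos (A x)) + 2 * (q x * Real.cos (B x)) := by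
    intro x
    rw [Real.cos_sub, Real.cos_add]
    ring
  have h0 : 0 ≤ ∑' x, (q x * Real.cos (A x - B x) + q x * Real.cos (A x + B x)
      + 2 * q x - 2 * (q x * Real.cos (A x)) - 2 * (q x * Real.cos (B x))) := by
    apply tsum_nonneg
    intro x
    have : q x * Real.cos (A x - B x) + q x * Real.cos (A x + B x)
        + 2 * q x - 2 * (q x * Real.cos (A x)) - 2 * (q x * Real.cos (B x))
        = 2 * (q x * ((1 - Real.cos (A x)) * (1 - Real.cos (B x)))) := by
      rw [Real.cos_sub, Real.cos_add]; ring
    rw [this]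
    have c1 := Real.cos_le_one (A x)
    have c2 := Real.cos_le_one (B x)
    exact mul_nonneg (by norm_num)
      (mul_nonneg (hq0 x) (mul_nonneg (by linarith) (by linarith)))
  have h12 : Summable fun x => q x * Real.cos (A x - B x) + q x * Real.cos (A x + B x) :=
    S1.add S2
  have h12q : Summable fun x => q x * Real.cos (A x - B x) + q x * Real.cos (A x + B x)
      + 2 * q x := h12.add (hqs.mul_left 2)
  have h123 : Summable fun x => q x * Real.cos (A x - B x) + q x * Real.cos (A x + B x)
      + 2 * q x - 2 * (q x * Real.cos (A x)) := h12q.sub (S3.mul_left 2)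
  have hsplit : (∑' x, (q x * Real.cos (A x - B x) + q x * Real.cos (A x + B x)
      + 2 * q x - 2 * (q x * Real.cos (A x)) - 2 * (q x * Real.cos (B x))))
      = (∑' x, q x * Real.cos (A x - B x)) + (∑' x, q x * Real.cos (A x + B x))
        + 2 * (∑' x, q x) - 2 * (∑' x, q x * Real.cos (A x))
        - 2 * (∑' x, q x * Real.cos (B x)) := by
    rw [Summable.tsum_sub h123 (S4.mul_left 2), Summable.tsum_sub h12q (S3.mul_left 2),
      Summable.tsum_add h12 (hqs.mul_left 2), Summable.tsum_add S1 S2, tsum_mul_left, tsum_mul_left,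
      tsum_mul_left]
  rw [hsplit, hq1] at h0
  rw [hsub, hadd]
  rw [charFn_eq q k, charFn_eq q u]
  change 2 * (∑' x, q x * Real.cos (A x)) + 2 * (∑' x, q x * Real.cos (B x)) - 2 ≤ _
  linarith

/-- For a symmetric probability kernel `q` on `ℤ^d` with characteristic function `φ`,
for all `a, b > 0` and all `k ∈ ℝ^d`,
`∫_{[-π,π]^d} e^{-b(1-φ(u)) - a(1-φ(k-u))} du ≥ e^{-a(1-φ(k))} ∫_{[-π,π]^d} e^{-(a+b)(1-φ(u))} du`. -/
theorem stmt7 (d : ℕ) (hd : 1 ≤ d) (q : (Fin d → ℤ) → ℝ)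
    (hq0 : ∀ x, 0 ≤ q x) (hq1 : ∑' x : Fin d → ℤ, q x = 1)
    (hsym : ∀ x, q (-x) = q x) :
    ∀ a b : ℝ, 0 < a → 0 < b → ∀ k : Fin d → ℝ,
      Real.exp (-a * (1 - charFn q k)) *
        (∫ u in Set.univ.pi (fun _ : Fin d => Set.Icc (-Real.pi) Real.pi),
          Real.exp (-(a + b) * (1 - charFn q u))) ≤
      ∫ u in Set.univ.pi (fun _ : Fin d => Set.Icc (-Real.pi) Real.pi),
        Real.exp (-b * (1 - charFn q u) - a * (1 - charFn q (k - u))) := by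
  intro a b ha hb k
  have hqs : Summable q := summable_of_tsum_one hq1
  have hφc : Continuous (charFn q) := continuous_charFn hq0 hqs
  set Box : Set (Fin d → ℝ) := Set.univ.pi (fun _ : Fin d => Set.Icc (-Real.pi) Real.pi)
    with hBox
  have hBoxMeas : MeasurableSet Box := MeasurableSet.univ_pi fun _ => measurableSet_Icc
  have hBoxCpt : IsCompact Box := isCompact_univ_pi fun _ => isCompact_Icc
  have hBoxneg : ∀ v : Fin d → ℝ, -v ∈ Box ↔ v ∈ Box := by
    intro v
    simp only [hBox, Set.mem_pi, Set.mem_univ, forall_true_left, Pi.neg_apply, Set.mem_Icc]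
    constructor <;> intro h i <;> · obtain ⟨h1, h2⟩ := h i; constructor <;> linarith
  set f : (Fin d → ℝ) → ℝ :=
    fun u => Real.exp (-b * (1 - charFn q u) - a * (1 - charFn q (k - u))) with hf
  set g : (Fin d → ℝ) → ℝ :=
    fun u => Real.exp (-b * (1 - charFn q u) - a * (1 - charFn q (k + u))) with hg
  set L : (Fin d → ℝ) → ℝ :=
    fun u => Real.exp (-a * (1 - charFn q k)) * Real.exp (-(a + b) * (1 - charFn q u))
    with hL
  have hfc : Continuous f := Real.continuous_exp.comp
    ((continuous_const.mul (continuous_const.sub hφc)).sub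
      (continuous_const.mul (continuous_const.sub
        (hφc.comp (continuous_const.sub continuous_id)))))
  have hgc : Continuous g := Real.continuous_exp.comp
    ((continuous_const.mul (continuous_const.sub hφc)).sub
      (continuous_const.mul (continuous_const.sub
        (hφc.comp (continuous_const.add continuous_id)))))
  have hLc : Continuous L := continuous_const.mul
    (Real.continuous_exp.comp (continuous_const.mul (continuous_const.sub hφc)))
  have hfi : IntegrableOn f Box := hfc.continuousOn.integrableOn_compact hBoxCpt
  have hgi : IntegrableOn g Box := hgc.continuousOn.integrableOn_compact hBoxCpt
  have hLi : IntegrableOn L Box := hLc.continuousOn.integrableOn_compact hBoxCpt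
  -- symmetry: ∫ g = ∫ f
  have hfneg : ∀ u, f (-u) = g u := by
    intro u
    simp only [hf, hg, charFn_neg, sub_neg_eq_add]
  have hfg : ∫ u in Box, g u = ∫ u in Box, f u := by
    rw [← integral_indicator hBoxMeas, ← integral_indicator hBoxMeas]
    have key : ∀ u, Box.indicator g u = Box.indicator f (-u) := by
      intro u
      by_cases h : u ∈ Box
      · rw [Set.indicator_of_mem h, Set.indicator_of_mem ((hBoxneg u).mpr h), hfneg]
      · rw [Set.indicator_of_notMem h,
          Set.indicator_of_notMem (fun hc => h ((hBoxneg u).mp hc))]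
    rw [funext key]
    exact integral_neg_eq_self _ _
  -- pointwise inequality
  have hpt : ∀ u, L u ≤ (f u + g u) / 2 := by
    intro u
    have hkey := charFn_key hq0 hq1 k u
    set X : ℝ := -b * (1 - charFn q u) - a * (1 - charFn q (k - u)) with hX
    set Y : ℝ := -b * (1 - charFn q u) - a * (1 - charFn q (k + u)) with hY
    have h1 : L u = Real.exp (-a * (1 - charFn q k) + -(a + b) * (1 - charFn q u)) :=
      (Real.exp_add _ _).symm
    have h2 : -a * (1 - charFn q k) + -(a + b) * (1 - charFn q u) ≤ (X + Y) / 2 := by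
      rw [hX, hY]; nlinarith
    have h3 : Real.exp ((X + Y) / 2) ≤ (Real.exp X + Real.exp Y) / 2 := by
      have e1 : Real.exp ((X + Y) / 2) = Real.exp (X / 2) * Real.exp (Y / 2) := by
        rw [← Real.exp_add]; ring_nf
      have e2 : Real.exp (X / 2) * Real.exp (X / 2) = Real.exp X := by
        rw [← Real.exp_add]; ring_nf
      have e3 : Real.exp (Y / 2) * Real.exp (Y / 2) = Real.exp Y := by
        rw [← Real.exp_add]; ring_nf
      nlinarith [sq_nonneg (Real.exp (X / 2) - Real.exp (Y / 2))]
    calc L u = Real.exp (-a * (1 - charFn q k) + -(a + b) * (1 - charFn q u)) := h1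
      _ ≤ Real.exp ((X + Y) / 2) := Real.exp_le_exp.mpr h2
      _ ≤ (Real.exp X + Real.exp Y) / 2 := h3
      _ = (f u + g u) / 2 := rfl
  calc Real.exp (-a * (1 - charFn q k)) * ∫ u in Box, Real.exp (-(a + b) * (1 - charFn q u))
      = ∫ u in Box, L u := by rw [hL, integral_const_mul]
    _ ≤ ∫ u in Box, (f u + g u) / 2 :=
        integral_mono hLi ((hfi.add hgi).div_const 2) hpt
    _ = ((∫ u in Box, f u) + ∫ u in Box, g u) / 2 := by
        rw [integral_div, integral_add hfi hgi]
    _ = ∫ u in Box, f u := by rw [hfg]; ring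
end

section
/- Let α ∈ (0,1) and c_K > 0, and let G be a random variable with values in (0,∞) whose Laplace transform is E[e^{−λG}] = exp(−(c_K Γ(1−α)/α) λ^α) for all λ ≥ 0. Then E[G^{−α}] = sin(απ)/(c_K π). -/
open MeasureTheory ProbabilityTheory
open scoped MeasureTheory

private lemma stable_aux {α C : ℝ} (hα : 0 < α) (hC : 0 < C) :
    IntegrableOn (fun t : ℝ => t ^ (α - 1) * Real.exp (-C * t ^ α)) (Set.Ioi 0) ∧
      ∫ t in Set.Ioi (0:ℝ), t ^ (α - 1) * Real.exp (-C * t ^ α) = 1 / (C * α) := by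
  set g : ℝ → ℝ := fun t => -(1 / (C * α)) * Real.exp (-C * t ^ α) with hg
  have hcont : ContinuousWithinAt g (Set.Ici 0) 0 := by
    have h : ContinuousAt (fun t : ℝ => t ^ α) 0 :=
      Real.continuousAt_rpow_const 0 α (Or.inr hα.le)
    exact (continuousAt_const.mul
      ((Real.continuous_exp.continuousAt.comp (continuousAt_const.mul h)))).continuousWithinAt
  have hderiv : ∀ x ∈ Set.Ioi (0:ℝ), HasDerivAt g (x ^ (α - 1) * Real.exp (-C * x ^ α)) x := by
    intro x hx
    have h1 : HasDerivAt (fun t : ℝ => t ^ α) (α * x ^ (α - 1)) x :=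
      Real.hasDerivAt_rpow_const (Or.inl (ne_of_gt hx))
    have h2 := ((h1.const_mul (-C)).exp).const_mul (-(1 / (C * α)))
    refine h2.congr_deriv ?_
    have hCα : C * α ≠ 0 := by positivity
    field_simp
  have hpos : ∀ x ∈ Set.Ioi (0:ℝ), 0 ≤ x ^ (α - 1) * Real.exp (-C * x ^ α) := by
    intro x hx
    have : (0:ℝ) < x := hx
    positivity
  have htend : Filter.Tendsto g Filter.atTop (nhds 0) := by
    have h1 : Filter.Tendsto (fun t : ℝ => -C * t ^ α) Filter.atTop Filter.atBot := by
      have := tendsto_rpow_atTop hα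
      exact this.const_mul_atTop_of_neg (by linarith)
    have h2 : Filter.Tendsto (fun t : ℝ => Real.exp (-C * t ^ α)) Filter.atTop (nhds 0) :=
      Real.tendsto_exp_atBot.comp h1
    have h3 := h2.const_mul (-(1 / (C * α)))
    rw [show (0:ℝ) = -(1 / (C * α)) * 0 by ring]
    exact h3
  have hint : IntegrableOn (fun x => x ^ (α - 1) * Real.exp (-C * x ^ α)) (Set.Ioi 0) :=
    integrableOn_Ioi_deriv_of_nonneg hcont hderiv hpos htend
  refine ⟨hint, ?_⟩
  rw [integral_Ioi_of_hasDerivAt_of_tendsto hcont hderiv hint htend]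
  simp [hg, Real.zero_rpow (ne_of_gt hα)]

private lemma stable_aux2 {α x : ℝ} (hα : 0 < α) (hx : 0 < x) :
    IntegrableOn (fun t : ℝ => t ^ (α - 1) * Real.exp (-(x * t))) (Set.Ioi 0) := by
  have h := integrableOn_rpow_mul_exp_neg_mul_rpow (p := 1) (s := α - 1) (b := x)
    (by linarith) one_pos hx
  simpa [Real.rpow_one, neg_mul] using h

/-- If `G` is a positive random variable with Laplace transform
`E[e^{-λG}] = exp(-(c_K Γ(1-α)/α) λ^α)` for all `λ ≥ 0` (one-sided stable of index
`α ∈ (0,1)`), then `E[G^{-α}] = sin(απ)/(c_K π)`. -/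
theorem stmt10 (α c_K : ℝ) (hα : α ∈ Set.Ioo (0:ℝ) 1) (hcK : 0 < c_K)
    {Ω : Type*} [MeasureSpace Ω] [IsProbabilityMeasure (ℙ : Measure Ω)]
    (G : Ω → ℝ) (hGmeas : Measurable G) (hGpos : ∀ ω, 0 < G ω)
    (hGlap : ∀ l : ℝ, 0 ≤ l →
      ∫ ω, Real.exp (-l * G ω) =
        Real.exp (-(c_K * Real.Gamma (1 - α) / α) * l ^ α)) :
    ∫ ω, (G ω) ^ (-α) = Real.sin (α * Real.pi) / (c_K * Real.pi) := by
  obtain ⟨hα0, hα1⟩ := hα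
  set C : ℝ := c_K * Real.Gamma (1 - α) / α with hCdef
  have hΓ1α : 0 < Real.Gamma (1 - α) := Real.Gamma_pos_of_pos (by linarith)
  have hΓα : 0 < Real.Gamma α := Real.Gamma_pos_of_pos hα0
  have hC : 0 < C := div_pos (mul_pos hcK hΓ1α) hα0
  -- pointwise Gamma-integral representation
  have hpt : ∀ ω, ENNReal.ofReal (Real.Gamma α * (G ω) ^ (-α)) =
      ∫⁻ t in Set.Ioi (0:ℝ), ENNReal.ofReal (t ^ (α - 1) * Real.exp (-(G ω * t))) := by
    intro ω
    have hx := hGpos ω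
    rw [← MeasureTheory.ofReal_integral_eq_lintegral_ofReal (stable_aux2 hα0 hx)
      (Filter.eventually_of_mem (self_mem_ae_restrict measurableSet_Ioi)
        (fun t (ht : t ∈ Set.Ioi (0:ℝ)) => by
          have : (0:ℝ) < t := ht
          positivity))]
    congr 1
    rw [Real.integral_rpow_mul_exp_neg_mul_Ioi hα0 hx, one_div,
      Real.inv_rpow hx.le, ← Real.rpow_neg hx.le, mul_comm]
  have hexp_int : ∀ t : ℝ, 0 ≤ t → Integrable (fun ω => Real.exp (-(G ω * t))) ℙ := by
    intro t ht
    have hm : Measurable fun ω => Real.exp (-(G ω * t)) := by fun_prop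
    refine Integrable.mono' (integrable_const 1) hm.aestronglyMeasurable ?_
    refine Filter.Eventually.of_forall fun ω => ?_
    rw [Real.norm_eq_abs, abs_of_pos (Real.exp_pos _)]
    exact Real.exp_le_one_iff.mpr (by nlinarith [hGpos ω])
  have hmain : ∫⁻ ω, ENNReal.ofReal (Real.Gamma α * (G ω) ^ (-α)) =
      ENNReal.ofReal (1 / (C * α)) := by
    calc ∫⁻ ω, ENNReal.ofReal (Real.Gamma α * (G ω) ^ (-α))
        = ∫⁻ ω, ∫⁻ t in Set.Ioi (0:ℝ),
            ENNReal.ofReal (t ^ (α-1) * Real.exp (-(G ω * t))) := lintegral_congr hpt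
      _ = ∫⁻ t in Set.Ioi (0:ℝ), ∫⁻ ω,
            ENNReal.ofReal (t ^ (α-1) * Real.exp (-(G ω * t))) := by
          apply lintegral_lintegral_swap
          apply Measurable.aemeasurable
          fun_prop
      _ = ∫⁻ t in Set.Ioi (0:ℝ), ENNReal.ofReal (t ^ (α-1) * Real.exp (-C * t ^ α)) := by
          refine setLIntegral_congr_fun measurableSet_Ioi
            (fun t ht => ?_)
          have ht0 : (0:ℝ) < t := ht
          calc ∫⁻ ω, ENNReal.ofReal (t ^ (α-1) * Real.exp (-(G ω * t)))
              = ∫⁻ ω, ENNReal.ofReal (t ^ (α-1)) * ENNReal.ofReal (Real.exp (-(G ω * t))) := by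
                simp_rw [ENNReal.ofReal_mul (by positivity : (0:ℝ) ≤ t ^ (α-1))]
            _ = ENNReal.ofReal (t ^ (α-1)) * ∫⁻ ω, ENNReal.ofReal (Real.exp (-(G ω * t))) :=
                lintegral_const_mul _ (by fun_prop)
            _ = ENNReal.ofReal (t ^ (α-1)) * ENNReal.ofReal (Real.exp (-C * t ^ α)) := by
                rw [← MeasureTheory.ofReal_integral_eq_lintegral_ofReal (hexp_int t ht0.le)
                  (Filter.Eventually.of_forall fun ω => (Real.exp_pos _).le)]
                congr 1
                rw [← hGlap t ht0.le]
                have harg : (fun ω => Real.exp (-(G ω * t))) = fun ω => Real.exp (-t * G ω) := by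
                  funext ω
                  ring_nf
                rw [harg]
            _ = ENNReal.ofReal (t ^ (α-1) * Real.exp (-C * t ^ α)) := by
                rw [← ENNReal.ofReal_mul (by positivity : (0:ℝ) ≤ t ^ (α-1))]
      _ = ENNReal.ofReal (1 / (C * α)) := by
          rw [← MeasureTheory.ofReal_integral_eq_lintegral_ofReal (stable_aux hα0 hC).1
            (Filter.eventually_of_mem (self_mem_ae_restrict measurableSet_Ioi)
              (fun t (ht : t ∈ Set.Ioi (0:ℝ)) => by
                have h0t : (0:ℝ) < t := ht
                positivity)), (stable_aux hα0 hC).2]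
  have hnn : 0 ≤ᵐ[ℙ] fun ω => Real.Gamma α * (G ω) ^ (-α) :=
    Filter.Eventually.of_forall fun ω => by have := hGpos ω; positivity
  have hms : AEStronglyMeasurable (fun ω => Real.Gamma α * (G ω) ^ (-α)) ℙ := by
    apply Measurable.aestronglyMeasurable
    fun_prop
  have hInt : Real.Gamma α * ∫ ω, (G ω) ^ (-α) = 1 / (C * α) := by
    rw [← integral_const_mul, MeasureTheory.integral_eq_lintegral_of_nonneg_ae hnn hms, hmain,
      ENNReal.toReal_ofReal (by positivity)]
  have hCα : C * α = c_K * Real.Gamma (1 - α) := by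
    rw [hCdef]
    field_simp
  have hsin : 0 < Real.sin (α * Real.pi) :=
    Real.sin_pos_of_pos_of_lt_pi (by positivity) (mul_lt_of_lt_one_left Real.pi_pos hα1)
  have hrefl := Real.Gamma_mul_Gamma_one_sub α
  rw [mul_comm Real.pi α] at hrefl
  have hπ := Real.pi_pos
  rw [hCα] at hInt
  have hGGs : Real.Gamma α * Real.Gamma (1 - α) * Real.sin (α * Real.pi) = Real.pi := by
    rw [hrefl, div_mul_cancel₀ _ (ne_of_gt hsin)]
  have hX : ∫ ω, (G ω) ^ (-α) = 1 / (c_K * Real.Gamma (1 - α) * Real.Gamma α) := by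
    rw [eq_div_iff (by positivity)]
    field_simp at hInt
    linear_combination hInt
  rw [hX, div_eq_div_iff (by positivity) (by positivity)]
  linear_combination (-c_K) * hGGs
end

section
/- With K, α, c_K as in the context, there exists t₀ > 0 such that for every n ≥ 1 and every t ≥ n t₀: K^{*n}(t) ≤ 2 n c_K (n/t)^{1+α}. -/
open MeasureTheory Filter

/-- Iterated convolutions: `Kconv K n = K^{*(n+1)}`, the `(n+1)`-fold convolution of `K`. -/
noncomputable def Kconv (K : ℝ → ℝ) : ℕ → ℝ → ℝ
  | 0 => K
  | n + 1 => fun t => ∫ s : ℝ, Kconv K n s * K (t - s)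

variable {K : ℝ → ℝ}

lemma kconv_meas (hK : Measurable K) : ∀ n, Measurable (Kconv K n)
  | 0 => hK
  | n + 1 => by
    have h : StronglyMeasurable (Function.uncurry fun t s => Kconv K n s * K (t - s)) :=
      (((kconv_meas hK n).comp measurable_snd).mul
        (hK.comp (measurable_fst.sub measurable_snd))).stronglyMeasurable
    show Measurable fun t => ∫ s : ℝ, Kconv K n s * K (t - s)
    exact h.integral_prod_right'.measurable

lemma kconv_nonneg (hK0 : ∀ t, 0 ≤ K t) : ∀ n t, 0 ≤ Kconv K n t
  | 0, t => hK0 t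
  | n + 1, t => by
    show 0 ≤ ∫ s : ℝ, Kconv K n s * K (t - s)
    exact integral_nonneg fun s => mul_nonneg (kconv_nonneg hK0 n s) (hK0 _)

lemma kconv_rep (hK : Measurable K) (hK0 : ∀ t, 0 ≤ K t) (n : ℕ) (t : ℝ) :
    Kconv K (n + 1) t
      = (∫⁻ s : ℝ, ENNReal.ofReal (Kconv K n s) * ENNReal.ofReal (K (t - s))).toReal := by
  show (∫ s : ℝ, Kconv K n s * K (t - s)) = _
  have hm : AEStronglyMeasurable (fun s : ℝ => Kconv K n s * K (t - s)) volume :=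
    ((kconv_meas hK n).mul (hK.comp (measurable_const.sub measurable_id))).aestronglyMeasurable
  rw [integral_eq_lintegral_of_nonneg_ae
      (Filter.Eventually.of_forall fun s => mul_nonneg (kconv_nonneg hK0 n s) (hK0 _)) hm]
  congr 1
  exact lintegral_congr fun s => ENNReal.ofReal_mul (kconv_nonneg hK0 n s)

lemma lintegral_K_one (hK : Measurable K) (hK0 : ∀ t, 0 ≤ K t) (hKint : Integrable K)
    (hK1 : ∫ t, K t = 1) : ∫⁻ t : ℝ, ENNReal.ofReal (K t) = 1 := by
  rw [← ofReal_integral_eq_lintegral_ofReal hKint (Filter.Eventually.of_forall hK0), hK1,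
    ENNReal.ofReal_one]

lemma lintegral_K_sub (hK : Measurable K) (hK0 : ∀ t, 0 ≤ K t) (hKint : Integrable K)
    (hK1 : ∫ t, K t = 1) (t : ℝ) : ∫⁻ s : ℝ, ENNReal.ofReal (K (t - s)) = 1 := by
  rw [(Measure.measurePreserving_sub_left (volume : Measure ℝ) t).lintegral_comp
    hK.ennreal_ofReal]
  exact lintegral_K_one hK hK0 hKint hK1

lemma kconv_lintegral (hK : Measurable K) (hK0 : ∀ t, 0 ≤ K t) (hKint : Integrable K)
    (hK1 : ∫ t, K t = 1) : ∀ n, ∫⁻ t : ℝ, ENNReal.ofReal (Kconv K n t) = 1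
  | 0 => lintegral_K_one hK hK0 hKint hK1
  | n + 1 => by
    have hum : Measurable (Function.uncurry fun t s : ℝ =>
        ENNReal.ofReal (Kconv K n s) * ENNReal.ofReal (K (t - s))) :=
      (((kconv_meas hK n).comp measurable_snd).ennreal_ofReal).mul
        ((hK.comp (measurable_fst.sub measurable_snd)).ennreal_ofReal)
    have hgm : Measurable (fun t : ℝ =>
        ∫⁻ s : ℝ, ENNReal.ofReal (Kconv K n s) * ENNReal.ofReal (K (t - s))) :=
      hum.lintegral_prod_right'
    have hg1 : (∫⁻ t : ℝ,
        ∫⁻ s : ℝ, ENNReal.ofReal (Kconv K n s) * ENNReal.ofReal (K (t - s))) = 1 := by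
      rw [lintegral_lintegral_swap hum.aemeasurable]
      have : ∀ s : ℝ, (∫⁻ t : ℝ, ENNReal.ofReal (Kconv K n s) * ENNReal.ofReal (K (t - s)))
          = ENNReal.ofReal (Kconv K n s) := by
        intro s
        rw [lintegral_const_mul _ (by exact (hK.comp (measurable_id.sub measurable_const)).ennreal_ofReal)]
        have : (∫⁻ t : ℝ, ENNReal.ofReal (K (t - s))) = 1 :=
          (lintegral_sub_right_eq_self (fun x => ENNReal.ofReal (K x)) s).trans
            (lintegral_K_one hK hK0 hKint hK1)
        rw [this, mul_one]
      rw [lintegral_congr this]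
      exact kconv_lintegral hK hK0 hKint hK1 n
    have hae : ∀ᵐ t : ℝ, (∫⁻ s : ℝ,
        ENNReal.ofReal (Kconv K n s) * ENNReal.ofReal (K (t - s))) ≠ ⊤ :=
      (ae_lt_top hgm (by rw [hg1]; exact ENNReal.one_ne_top)).mono fun t h => h.ne
    rw [lintegral_congr_ae (hae.mono fun t h => by
      rw [kconv_rep hK hK0 n t, ENNReal.ofReal_toReal h])]
    exact hg1

lemma kconv_bound (α c_K : ℝ) (hα : α ∈ Set.Ioo (0:ℝ) 1) (hcK : 0 < c_K)
    (hK : Measurable K) (hK0 : ∀ t, 0 ≤ K t) (hKint : Integrable K) (hK1 : ∫ t, K t = 1)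
    (t₀ : ℝ) (ht₀ : 0 < t₀)
    (hT : ∀ x : ℝ, t₀ ≤ x → K x ≤ (3/2) * c_K / x ^ (1 + α)) :
    ∀ n : ℕ, ∀ t : ℝ, ((n:ℝ) + 1) * t₀ ≤ t →
      Kconv K n t ≤ 2 * ((n:ℝ) + 1) * c_K * (((n:ℝ) + 1) / t) ^ (1 + α) := by
  have hp0 : 0 < 1 + α := by linarith [hα.1]
  intro n
  induction n with
  | zero =>
    intro t ht
    push_cast at ht ⊢
    simp only [zero_add] at ht ⊢
    rw [one_mul] at ht
    have ht' : 0 < t := lt_of_lt_of_le ht₀ ht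
    have h1 := hT t ht
    have h2 : (1 / t) ^ (1 + α) = (t ^ (1 + α))⁻¹ := by
      rw [one_div, Real.inv_rpow ht'.le]
    have h3 : 0 < t ^ (1 + α) := Real.rpow_pos_of_pos ht' _
    show K t ≤ 2 * 1 * c_K * (1 / t) ^ (1 + α)
    rw [h2]
    calc K t ≤ (3/2) * c_K / t ^ (1 + α) := h1
      _ ≤ 2 * 1 * c_K * (t ^ (1 + α))⁻¹ := by
          rw [div_eq_mul_inv]
          gcongr
          linarith
  | succ n ih =>
    intro t ht
    push_cast at ht ⊢
    set N : ℝ := (n : ℝ) + 1 with hN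
    have hN0 : 0 < N := by positivity
    have hN1 : 0 < N + 1 := by positivity
    have ht' : 0 < t := lt_of_lt_of_le (by positivity) ht
    set c : ℝ := N * t / (N + 1) with hc
    have hc0 : 0 < c := by positivity
    have htc : t₀ ≤ t / (N + 1) := by
      rw [le_div_iff₀ hN1]; nlinarith
    set X : ℝ := ((N + 1) / t) ^ (1 + α) with hX
    have hX0 : 0 ≤ X := Real.rpow_nonneg (by positivity) _
    -- bound on region 1
    have key1 : ∀ s : ℝ, s ≤ c → K (t - s) ≤ (3/2) * c_K * X := by
      intro s hs
      have hts : t / (N + 1) ≤ t - s := by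
        have hsub : t - c = t / (N + 1) := by
          rw [eq_div_iff hN1.ne', hc]
          field_simp
          ring
        linarith
      have h1 := hT _ (le_trans htc hts)
      have h2 : (t / (N + 1)) ^ (1 + α) ≤ (t - s) ^ (1 + α) :=
        Real.rpow_le_rpow (by positivity) hts hp0.le
      have h3 : 0 < (t / (N + 1)) ^ (1 + α) := Real.rpow_pos_of_pos (by positivity) _
      have h4 : X = ((t / (N + 1)) ^ (1 + α))⁻¹ := by
        rw [hX, (inv_div t (N + 1)).symm, Real.inv_rpow (by positivity)]
      calc K (t - s) ≤ (3/2) * c_K / (t - s) ^ (1 + α) := h1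
        _ ≤ (3/2) * c_K / (t / (N + 1)) ^ (1 + α) := by gcongr
        _ = (3/2) * c_K * X := by rw [h4, div_eq_mul_inv]
    -- bound on region 2
    have key2 : ∀ s : ℝ, c < s → Kconv K n s ≤ 2 * N * c_K * X := by
      intro s hs
      have hs0 : 0 < s := lt_trans hc0 hs
      have hNs : N * t₀ ≤ s := by
        have h1 : N * t₀ ≤ N * (t / (N + 1)) := by nlinarith
        have h2 : N * (t / (N + 1)) = c := by rw [hc, mul_div_assoc]
        exact (h1.trans_eq h2).trans hs.le
      have h1 := ih s hNs
      have h2 : (N / s) ^ (1 + α) ≤ X := by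
        rw [hX]
        apply Real.rpow_le_rpow (by positivity) _ hp0.le
        rw [div_le_div_iff₀ hs0 ht']
        have h3 : c * (N + 1) = N * t := by
          rw [hc, div_mul_cancel₀ _ hN1.ne']
        nlinarith [hs.le]
      calc Kconv K n s ≤ 2 * N * c_K * (N / s) ^ (1 + α) := h1
        _ ≤ 2 * N * c_K * X := by gcongr
    -- lintegral estimate
    have hB1 : (0:ℝ) ≤ (3/2) * c_K * X := by positivity
    have hB2 : (0:ℝ) ≤ 2 * N * c_K * X := by positivity
    set g : ℝ → ENNReal := fun s => ENNReal.ofReal (Kconv K n s) * ENNReal.ofReal (K (t - s))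
      with hg
    have hsplit : (∫⁻ s : ℝ, g s) = (∫⁻ s in Set.Iic c, g s) + ∫⁻ s in (Set.Iic c)ᶜ, g s :=
      (lintegral_add_compl g measurableSet_Iic).symm
    have hreg1 : (∫⁻ s in Set.Iic c, g s) ≤ ENNReal.ofReal ((3/2) * c_K * X) := by
      calc (∫⁻ s in Set.Iic c, g s)
          ≤ ∫⁻ s in Set.Iic c, ENNReal.ofReal (Kconv K n s) * ENNReal.ofReal ((3/2) * c_K * X) := by
            apply setLIntegral_mono' measurableSet_Iic
            intro s hs
            exact mul_le_mul_right (ENNReal.ofReal_le_ofReal (key1 s hs)) _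
        _ = (∫⁻ s in Set.Iic c, ENNReal.ofReal (Kconv K n s)) * ENNReal.ofReal ((3/2) * c_K * X) :=
            lintegral_mul_const' _ _ ENNReal.ofReal_ne_top
        _ ≤ 1 * ENNReal.ofReal ((3/2) * c_K * X) := by
            gcongr
            rw [← kconv_lintegral hK hK0 hKint hK1 n]
            exact setLIntegral_le_lintegral _ _
        _ = ENNReal.ofReal ((3/2) * c_K * X) := one_mul _
    have hreg2 : (∫⁻ s in (Set.Iic c)ᶜ, g s) ≤ ENNReal.ofReal (2 * N * c_K * X) := by
      calc (∫⁻ s in (Set.Iic c)ᶜ, g s)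
          ≤ ∫⁻ s in (Set.Iic c)ᶜ, ENNReal.ofReal (2 * N * c_K * X) * ENNReal.ofReal (K (t - s)) := by
            apply setLIntegral_mono' measurableSet_Iic.compl
            intro s hs
            have : c < s := by simpa using hs
            exact mul_le_mul_left (ENNReal.ofReal_le_ofReal (key2 s this)) _
        _ = ENNReal.ofReal (2 * N * c_K * X) * ∫⁻ s in (Set.Iic c)ᶜ, ENNReal.ofReal (K (t - s)) :=
            lintegral_const_mul' _ _ ENNReal.ofReal_ne_top
        _ ≤ ENNReal.ofReal (2 * N * c_K * X) * 1 := by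
            gcongr
            rw [← lintegral_K_sub hK hK0 hKint hK1 t]
            exact setLIntegral_le_lintegral _ _
        _ = ENNReal.ofReal (2 * N * c_K * X) := mul_one _
    have htot : (∫⁻ s : ℝ, g s) ≤ ENNReal.ofReal ((3/2) * c_K * X + 2 * N * c_K * X) := by
      rw [hsplit, ENNReal.ofReal_add hB1 hB2]
      exact add_le_add hreg1 hreg2
    have hrep := kconv_rep hK hK0 n t
    rw [hrep]
    calc (∫⁻ s : ℝ, g s).toReal ≤ (3/2) * c_K * X + 2 * N * c_K * X :=
        ENNReal.toReal_le_of_le_ofReal (by positivity) htot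
      _ ≤ 2 * (N + 1) * c_K * X := by nlinarith [mul_nonneg hcK.le hX0]

/-- For a probability density `K` on `(0,∞)` with `t^{1+α}K(t) → c_K`, `α ∈ (0,1)`,
there exists `t₀ > 0` such that for every `n ≥ 1` and every `t ≥ n t₀`,
`K^{*n}(t) ≤ 2 n c_K (n/t)^{1+α}`. -/
theorem stmt12 (α c_K : ℝ) (hα : α ∈ Set.Ioo (0:ℝ) 1) (hcK : 0 < c_K)
    (K : ℝ → ℝ) (hKmeas : Measurable K) (hK0 : ∀ t, 0 ≤ K t)
    (hKsupp : ∀ t ≤ (0:ℝ), K t = 0) (hK1 : ∫ t, K t = 1)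
    (hKtail : Tendsto (fun t : ℝ => t ^ (1 + α) * K t) atTop (nhds c_K)) :
    ∃ t₀ : ℝ, 0 < t₀ ∧ ∀ n : ℕ, 1 ≤ n → ∀ t : ℝ, (n : ℝ) * t₀ ≤ t →
      Kconv K (n - 1) t ≤ 2 * (n : ℝ) * c_K * ((n : ℝ) / t) ^ (1 + α) := by
  have hKint : Integrable K := by
    by_contra h
    rw [integral_undef h] at hK1
    norm_num at hK1
  have htail : ∀ᶠ x in atTop, x ^ (1 + α) * K x ≤ (3/2) * c_K :=
    hKtail.eventually_le_const (by linarith)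
  obtain ⟨T, hTspec⟩ := Filter.eventually_atTop.mp htail
  have ht₀pos : (0:ℝ) < max T 1 := lt_of_lt_of_le one_pos (le_max_right _ _)
  have hT : ∀ x : ℝ, max T 1 ≤ x → K x ≤ (3/2) * c_K / x ^ (1 + α) := by
    intro x hx
    have hx0 : (0:ℝ) < x := lt_of_lt_of_le one_pos ((le_max_right T 1).trans hx)
    have h1 : x ^ (1 + α) * K x ≤ (3/2) * c_K := hTspec x ((le_max_left T 1).trans hx)
    rw [le_div_iff₀ (Real.rpow_pos_of_pos hx0 _)]
    linarith [h1, mul_comm (K x) (x ^ (1 + α))]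
  refine ⟨max T 1, ht₀pos, ?_⟩
  intro n hn t ht
  obtain ⟨m, rfl⟩ : ∃ m, n = m + 1 := ⟨n - 1, (Nat.succ_pred_eq_of_pos hn).symm⟩
  simp only [Nat.add_sub_cancel]
  have h := kconv_bound α c_K hα hcK hKmeas hK0 hKint hK1 (max T 1) ht₀pos hT m t
    (by push_cast at ht ⊢; linarith)
  push_cast
  convert h using 2
end

section
/- For every ξ > 1/2, the following two triple integrals over [0,∞)³ are finite: (i) ∫∫∫ (1 + r₁r₂ + r₁r₃ + r₂r₃)^{−3/2} (log(e + r₁ + r₂) log(e + r₂ + r₃))^{−ξ} dr₁ dr₂ dr₃ < ∞, and (ii) ∫∫∫ (1 + r₁ + r₂)^{−3/2} (1 + r₂ + r₃)^{−3/2} (log(e + r₁ + r₂) log(e + r₂ + r₃))^{−ξ} dr₁ dr₂ dr₃ < ∞. -/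
open MeasureTheory Set Filter Real

namespace Stmt19Aux

/-! ### Elementary facts -/

lemma log_ge_one {t : ℝ} (ht : 0 ≤ t) : 1 ≤ Real.log (Real.exp 1 + t) := by
  have h := Real.log_le_log (Real.exp_pos 1) (by linarith : Real.exp 1 ≤ Real.exp 1 + t)
  simpa using h

lemma rpow_anti {x y z : ℝ} (hx : 0 < x) (hxy : x ≤ y) (hz : z ≤ 0) : y ^ z ≤ x ^ z := by
  have h := Real.rpow_le_rpow hx.le hxy (neg_nonneg.2 hz)
  have hy : 0 < y := hx.trans_le hxy
  rw [← neg_neg z, Real.rpow_neg hy.le, Real.rpow_neg hx.le]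
  exact inv_anti₀ (Real.rpow_pos_of_pos hx _) h

lemma inv_rpow_eq {x : ℝ} (hx : 0 ≤ x) (p : ℝ) : (x ^ p)⁻¹ = x ^ (-p) :=
  (Real.rpow_neg hx p).symm

lemma neg_half : (-(1:ℝ)/2) = -((1:ℝ)/2) := by norm_num

lemma rpow_neg_half_eq {a : ℝ} (ha : 0 ≤ a) : a ^ (-(1:ℝ)/2) = (a ^ ((1:ℝ)/2))⁻¹ := by
  rw [neg_half, Real.rpow_neg ha]

lemma sqrt_ineq {a b : ℝ} (ha : 0 < a) (hb : 0 < b) :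
    (a+b)⁻¹ ≤ a ^ (-(1:ℝ)/2) * b ^ (-(1:ℝ)/2) := by
  have h1 : a ^ ((1:ℝ)/2) * b ^ ((1:ℝ)/2) ≤ a + b := by
    rw [← Real.sqrt_eq_rpow, ← Real.sqrt_eq_rpow]
    nlinarith [Real.sq_sqrt ha.le, Real.sq_sqrt hb.le, sq_nonneg (Real.sqrt a - Real.sqrt b),
      Real.sqrt_nonneg a, Real.sqrt_nonneg b]
  have h2 : (0:ℝ) < a ^ ((1:ℝ)/2) * b ^ ((1:ℝ)/2) := by positivity
  calc (a+b)⁻¹ ≤ (a ^ ((1:ℝ)/2) * b ^ ((1:ℝ)/2))⁻¹ := inv_anti₀ h2 h1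
    _ = a ^ (-(1:ℝ)/2) * b ^ (-(1:ℝ)/2) := by
        rw [mul_inv, rpow_neg_half_eq ha.le, rpow_neg_half_eq hb.le]

lemma prod_ineq {a b : ℝ} (ha : 0 < a) (hb : 0 < b) :
    (1 + a*b) ^ (-(1:ℝ)/2) ≤ a ^ (-(1:ℝ)/2) * b ^ (-(1:ℝ)/2) := by
  have h1 : (1 + a*b) ^ (-(1:ℝ)/2) ≤ (a*b) ^ (-(1:ℝ)/2) :=
    rpow_anti (by positivity) (by linarith) (by norm_num)
  rw [Real.mul_rpow ha.le hb.le] at h1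
  exact h1

lemma merge_inv_half {b : ℝ} (hb : 0 < b) : b⁻¹ * b ^ (-(1:ℝ)/2) = b ^ (-(3:ℝ)/2) := by
  rw [← Real.rpow_neg_one b, ← Real.rpow_add hb]
  norm_num

lemma merge_log {L ξ : ℝ} (hL : 0 < L) : L ^ (-ξ) * L ^ (-ξ) = L ^ (-(2*ξ)) := by
  rw [← Real.rpow_add hL]
  ring_nf

lemma half_half {a : ℝ} (ha : 0 < a) : a ^ (-(1:ℝ)/2) * a ^ (-(1:ℝ)/2) = a⁻¹ := by
  rw [← Real.rpow_add ha]
  norm_num [Real.rpow_neg_one]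

/-! ### Measurability helpers -/

lemma mhalf : Measurable fun y : ℝ => ENNReal.ofReal (y ^ (-(1:ℝ)/2)) :=
  (measurable_id.pow_const _).ennreal_ofReal

lemma m32 : Measurable fun y : ℝ => ENNReal.ofReal (y ^ (-(3:ℝ)/2)) :=
  (measurable_id.pow_const _).ennreal_ofReal

lemma m54 : Measurable fun y : ℝ => ENNReal.ofReal (y ^ (-(5:ℝ)/4)) :=
  (measurable_id.pow_const _).ennreal_ofReal

lemma m54' : Measurable fun y : ℝ => ENNReal.ofReal (4 * y ^ (-(5:ℝ)/4)) :=
  (measurable_const.mul (measurable_id.pow_const _)).ennreal_ofReal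

lemma mlogpow {p : ℝ} : Measurable fun y : ℝ => Real.log (Real.exp 1 + y) ^ p :=
  (Real.measurable_log.comp (measurable_const.add measurable_id)).pow_const _

/-! ### One-dimensional integral computations -/

lemma lint_deriv {g g' : ℝ → ℝ} {a l : ℝ}
    (hderiv : ∀ x ∈ Ici a, HasDerivAt g (g' x) x)
    (g'pos : ∀ x ∈ Ioi a, 0 ≤ g' x)
    (hg : Tendsto g atTop (nhds l)) :
    ∫⁻ x in Ioi a, ENNReal.ofReal (g' x) = ENNReal.ofReal (l - g a) := by
  rw [← integral_Ioi_of_hasDerivAt_of_nonneg' hderiv g'pos hg,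
    ofReal_integral_eq_lintegral_ofReal (integrableOn_Ioi_deriv_of_nonneg' hderiv g'pos hg)
      ((ae_restrict_iff' measurableSet_Ioi).2 (ae_of_all _ g'pos))]

lemma lint_linear {k s : ℝ} (hk : 0 < k) (hs : 0 < s) :
    ∫⁻ c in Ioi (0:ℝ), ENNReal.ofReal ((k + s*c) ^ (-(3:ℝ)/2)) =
      ENNReal.ofReal (2 / s * k ^ (-(1:ℝ)/2)) := by
  have hderiv : ∀ x ∈ Ici (0:ℝ),
      HasDerivAt (fun c => -(2/s) * (k + s*c) ^ (-(1:ℝ)/2)) ((k + s*x) ^ (-(3:ℝ)/2)) x := by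
    intro x hx
    have hx0 : (0:ℝ) ≤ x := hx
    have hkx : 0 < k + s*x := by nlinarith
    have h1 : HasDerivAt (fun c : ℝ => k + s*c) s x := by
      simpa using ((hasDerivAt_id x).const_mul s).const_add k
    have h2 := (h1.rpow_const (p := -(1:ℝ)/2) (Or.inl hkx.ne')).const_mul (-(2/s))
    refine h2.congr_deriv ?_
    rw [show (-(1:ℝ)/2 - 1) = (-(3:ℝ)/2) by norm_num]
    field_simp
  have g'pos : ∀ x ∈ Ioi (0:ℝ), 0 ≤ (k + s*x) ^ (-(3:ℝ)/2) := by
    intro x hx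
    have : (0:ℝ) < x := hx
    exact Real.rpow_nonneg (by nlinarith) _
  have htend : Tendsto (fun c => -(2/s) * (k + s*c) ^ (-(1:ℝ)/2)) atTop (nhds 0) := by
    have h1 : Tendsto (fun c : ℝ => k + s*c) atTop atTop :=
      tendsto_atTop_add_const_left _ k (Tendsto.const_mul_atTop hs tendsto_id)
    have h2 : Tendsto (fun c : ℝ => (k + s*c) ^ (-(1:ℝ)/2)) atTop (nhds 0) := by
      have := (tendsto_rpow_neg_atTop (by norm_num : (0:ℝ) < 1/2)).comp h1
      simpa [Function.comp_def, neg_div] using this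
    simpa using h2.const_mul (-(2/s))
  rw [lint_deriv hderiv g'pos htend, mul_zero, add_zero, zero_sub, neg_mul, neg_neg]

lemma lint_rpow_Ioi {q a : ℝ} (hq : q < -1) (ha : 0 < a) :
    ∫⁻ x in Ioi a, ENNReal.ofReal (x ^ q) = ENNReal.ofReal (-a ^ (q+1) / (q+1)) := by
  rw [← ofReal_integral_eq_lintegral_ofReal (integrableOn_Ioi_rpow_of_lt hq ha)
      ((ae_restrict_iff' measurableSet_Ioi).2 (ae_of_all _ fun x hx =>
        Real.rpow_nonneg (le_of_lt (ha.trans hx)) q)),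
    integral_Ioi_rpow_of_lt hq ha]

lemma lint_rpow_Ioc {B : ℝ} (hB : 0 ≤ B) :
    ∫⁻ x in Ioc (0:ℝ) B, ENNReal.ofReal (x ^ (-(1:ℝ)/2)) = ENNReal.ofReal (2 * B ^ ((1:ℝ)/2)) := by
  have hint : IntervalIntegrable (fun x : ℝ => x ^ (-(1:ℝ)/2)) volume 0 B := by
    apply intervalIntegral.intervalIntegrable_rpow' (by norm_num)
  have hio : IntegrableOn (fun x : ℝ => x ^ (-(1:ℝ)/2)) (Ioc 0 B) volume :=
    (intervalIntegrable_iff_integrableOn_Ioc_of_le hB).1 hint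
  rw [← ofReal_integral_eq_lintegral_ofReal hio
      ((ae_restrict_iff' measurableSet_Ioc).2 (ae_of_all _ fun x hx =>
        Real.rpow_nonneg hx.1.le _))]
  congr 1
  rw [← intervalIntegral.integral_of_le hB, integral_rpow (Or.inl (by norm_num))]
  rw [Real.zero_rpow (by norm_num)]
  norm_num
  ring

lemma lint_log {p : ℝ} (hp : 1 < p) {a : ℝ} (ha : 0 ≤ a) :
    ∫⁻ x in Ioi a, ENNReal.ofReal ((Real.exp 1 + x)⁻¹ * Real.log (Real.exp 1 + x) ^ (-p)) < ⊤ := by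
  have hne : (1:ℝ) - p ≠ 0 := by linarith
  have hderiv : ∀ x ∈ Ici a, HasDerivAt
      (fun x => (1/(1-p)) * Real.log (Real.exp 1 + x) ^ (1-p))
      ((Real.exp 1 + x)⁻¹ * Real.log (Real.exp 1 + x) ^ (-p)) x := by
    intro x hx
    have hx0 : (0:ℝ) ≤ x := le_trans ha hx
    have hex : (0:ℝ) < Real.exp 1 + x := by positivity
    have hlog : (1:ℝ) ≤ Real.log (Real.exp 1 + x) := log_ge_one hx0
    have h1 : HasDerivAt (fun x : ℝ => Real.exp 1 + x) 1 x := by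
      simpa using (hasDerivAt_id x).const_add (Real.exp 1)
    have h2 : HasDerivAt (fun x : ℝ => Real.log (Real.exp 1 + x)) (1 / (Real.exp 1 + x)) x :=
      h1.log hex.ne'
    have h3 := (h2.rpow_const (p := 1-p) (Or.inl (by linarith))).const_mul (1/(1-p))
    refine h3.congr_deriv ?_
    rw [show (1-p-1) = -p by ring]
    field_simp
  have g'pos : ∀ x ∈ Ioi a, 0 ≤ (Real.exp 1 + x)⁻¹ * Real.log (Real.exp 1 + x) ^ (-p) := by
    intro x hx
    have hx0 : (0:ℝ) ≤ x := le_of_lt (lt_of_le_of_lt ha hx)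
    have hex : (0:ℝ) < Real.exp 1 + x := by positivity
    have hlog : (1:ℝ) ≤ Real.log (Real.exp 1 + x) := log_ge_one hx0
    positivity
  have htend : Tendsto (fun x => (1/(1-p)) * Real.log (Real.exp 1 + x) ^ (1-p)) atTop (nhds 0) := by
    have h1 : Tendsto (fun x : ℝ => Real.exp 1 + x) atTop atTop :=
      tendsto_atTop_add_const_left _ _ tendsto_id
    have h2 : Tendsto (fun x : ℝ => Real.log (Real.exp 1 + x)) atTop atTop :=
      Real.tendsto_log_atTop.comp h1
    have h3 : Tendsto (fun x : ℝ => Real.log (Real.exp 1 + x) ^ (1-p)) atTop (nhds 0) := by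
      have := (tendsto_rpow_neg_atTop (by linarith : (0:ℝ) < p - 1)).comp h2
      simpa [Function.comp_def, show -(p-1) = 1-p by ring] using this
    simpa using h3.const_mul (1/(1-p))
  rw [lint_deriv hderiv g'pos htend]
  exact ENNReal.ofReal_lt_top

lemma lint_mono_const {c : ℝ} (hc : 0 ≤ c) {s : Set ℝ} {f : ℝ → ℝ} {g : ℝ → ℝ}
    (hg : Measurable g) (hle : ∀ x ∈ s, f x ≤ c * g x)
    (hfin : ∫⁻ x in s, ENNReal.ofReal (g x) < ⊤) :
    ∫⁻ x in s, ENNReal.ofReal (f x) < ⊤ := by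
  calc ∫⁻ x in s, ENNReal.ofReal (f x)
      ≤ ∫⁻ x in s, ENNReal.ofReal c * ENNReal.ofReal (g x) := by
        apply setLIntegral_mono (by exact measurable_const.mul (ENNReal.measurable_ofReal.comp hg))
        intro x hx
        rw [← ENNReal.ofReal_mul hc]
        exact ENNReal.ofReal_le_ofReal (hle x hx)
    _ = ENNReal.ofReal c * ∫⁻ x in s, ENNReal.ofReal (g x) :=
        lintegral_const_mul' _ _ ENNReal.ofReal_ne_top
    _ < ⊤ := ENNReal.mul_lt_top ENNReal.ofReal_lt_top hfin

lemma lint_one_div {p : ℝ} (hp : 1 < p) :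
    ∫⁻ x in Ioi (1:ℝ), ENNReal.ofReal (x⁻¹ * Real.log (Real.exp 1 + x) ^ (-p)) < ⊤ := by
  apply lint_mono_const (by positivity : (0:ℝ) ≤ 1 + Real.exp 1)
    (g := fun x => (Real.exp 1 + x)⁻¹ * Real.log (Real.exp 1 + x) ^ (-p))
    (((measurable_const.add measurable_id).inv).mul
      ((Real.measurable_log.comp (measurable_const.add measurable_id)).pow_const _))
    ?_ (lint_log hp zero_le_one)
  intro x hx
  have hx1 : (1:ℝ) ≤ x := le_of_lt hx
  have hx0 : (0:ℝ) < x := by linarith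
  have hex : (0:ℝ) < Real.exp 1 + x := by positivity
  have hlog : (0:ℝ) < Real.log (Real.exp 1 + x) := by
    linarith [log_ge_one (by linarith : (0:ℝ) ≤ x)]
  have key : x⁻¹ ≤ (1 + Real.exp 1) * (Real.exp 1 + x)⁻¹ := by
    rw [← one_div, ← div_eq_mul_inv, div_le_div_iff₀ hx0 hex]
    nlinarith [Real.exp_pos 1]
  calc x⁻¹ * Real.log (Real.exp 1 + x) ^ (-p)
      ≤ ((1 + Real.exp 1) * (Real.exp 1 + x)⁻¹) * Real.log (Real.exp 1 + x) ^ (-p) :=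
        mul_le_mul_of_nonneg_right key (Real.rpow_nonneg hlog.le _)
    _ = (1 + Real.exp 1) * ((Real.exp 1 + x)⁻¹ * Real.log (Real.exp 1 + x) ^ (-p)) := by ring

lemma lint_one_add {p : ℝ} (hp : 1 < p) :
    ∫⁻ b in Ioi (0:ℝ), ENNReal.ofReal ((1+b)⁻¹ * Real.log (Real.exp 1 + b) ^ (-p)) < ⊤ := by
  apply lint_mono_const (le_of_lt (Real.exp_pos 1))
    (g := fun x => (Real.exp 1 + x)⁻¹ * Real.log (Real.exp 1 + x) ^ (-p))
    (((measurable_const.add measurable_id).inv).mul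
      ((Real.measurable_log.comp (measurable_const.add measurable_id)).pow_const _))
    ?_ (lint_log hp le_rfl)
  intro x hx
  have hx0 : (0:ℝ) < x := hx
  have hex : (0:ℝ) < Real.exp 1 + x := by positivity
  have hlog : (0:ℝ) < Real.log (Real.exp 1 + x) := by
    linarith [log_ge_one hx0.le]
  have key : (1+x)⁻¹ ≤ Real.exp 1 * (Real.exp 1 + x)⁻¹ := by
    rw [← one_div, ← div_eq_mul_inv, div_le_div_iff₀ (by linarith) hex]
    nlinarith [Real.exp_one_gt_d9]
  calc (1+x)⁻¹ * Real.log (Real.exp 1 + x) ^ (-p)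
      ≤ (Real.exp 1 * (Real.exp 1 + x)⁻¹) * Real.log (Real.exp 1 + x) ^ (-p) :=
        mul_le_mul_of_nonneg_right key (Real.rpow_nonneg hlog.le _)
    _ = Real.exp 1 * ((Real.exp 1 + x)⁻¹ * Real.log (Real.exp 1 + x) ^ (-p)) := by ring

lemma lint_ind {s : Set ℝ} (hs : MeasurableSet s) (hsub : s ⊆ Ioi (0:ℝ)) (f : ℝ → ENNReal) :
    ∫⁻ x in Ioi (0:ℝ), s.indicator f x = ∫⁻ x in s, f x := by
  rw [lintegral_indicator hs, Measure.restrict_restrict hs, Set.inter_eq_left.mpr hsub]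

lemma lint_cmul {c : ℝ} (hc : 0 ≤ c) {s : Set ℝ} {f : ℝ → ℝ}
    (hf : Measurable fun x => ENNReal.ofReal (f x)) :
    ∫⁻ x in s, ENNReal.ofReal (c * f x) = ENNReal.ofReal c * ∫⁻ x in s, ENNReal.ofReal (f x) := by
  rw [← lintegral_const_mul _ hf]
  apply lintegral_congr
  intro x
  exact ENNReal.ofReal_mul hc

lemma cIoc1 : ∫⁻ y in Ioc (0:ℝ) 1, ENNReal.ofReal (y ^ (-(1:ℝ)/2)) = ENNReal.ofReal 2 := by
  have h := lint_rpow_Ioc (B := 1) zero_le_one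
  simpa using h

lemma cIoi1 : ∫⁻ y in Ioi (1:ℝ), ENNReal.ofReal (y ^ (-(3:ℝ)/2)) = ENNReal.ofReal 2 := by
  have h := lint_rpow_Ioi (q := -(3:ℝ)/2) (a := 1) (by norm_num) one_pos
  rw [h]
  norm_num

lemma cIoi_a {a : ℝ} (ha : 0 < a) :
    ∫⁻ y in Ioi a, ENNReal.ofReal (y ^ (-(3:ℝ)/2)) = ENNReal.ofReal (2 * a ^ (-(1:ℝ)/2)) := by
  rw [lint_rpow_Ioi (by norm_num : (-(3:ℝ)/2) < -1) ha]
  congr 1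
  rw [show (-(3:ℝ)/2 + 1) = -(1:ℝ)/2 by norm_num]
  ring

/-! ### Reduction of `IntegrableOn` over the octant to an iterated lintegral -/

lemma reduce {f : ℝ × ℝ × ℝ → ℝ} (hm : Measurable f)
    (hnn : ∀ p : ℝ × ℝ × ℝ, p ∈ Ici (0:ℝ) ×ˢ Ici (0:ℝ) ×ˢ Ici (0:ℝ) → 0 ≤ f p)
    (hfin : ∫⁻ a in Ioi (0:ℝ), ∫⁻ b in Ioi (0:ℝ), ∫⁻ c in Ioi (0:ℝ),
        ENNReal.ofReal (f (a, b, c)) < ⊤) :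
    IntegrableOn f (Ici (0:ℝ) ×ˢ Ici (0:ℝ) ×ˢ Ici (0:ℝ)) volume := by
  have hs : MeasurableSet (Ici (0:ℝ) ×ˢ Ici (0:ℝ) ×ˢ Ici (0:ℝ)) :=
    measurableSet_Ici.prod (measurableSet_Ici.prod measurableSet_Ici)
  have hmes : (volume : Measure (ℝ × ℝ × ℝ)).restrict (Ici (0:ℝ) ×ˢ Ici (0:ℝ) ×ˢ Ici (0:ℝ))
      = ((volume : Measure ℝ).restrict (Ioi 0)).prod
          (((volume : Measure ℝ).restrict (Ioi 0)).prod
            ((volume : Measure ℝ).restrict (Ioi 0))) := by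
    simp only [restrict_Ioi_eq_restrict_Ici]
    rw [Measure.prod_restrict, Measure.prod_restrict, ← Measure.volume_eq_prod,
      ← Measure.volume_eq_prod]
  refine ⟨hm.aestronglyMeasurable, ?_⟩
  rw [hasFiniteIntegral_iff_ofReal ((ae_restrict_iff' hs).2 (ae_of_all _ hnn))]
  rw [hmes, lintegral_prod _ hm.ennreal_ofReal.aemeasurable]
  calc ∫⁻ a in Ioi (0:ℝ), ∫⁻ q, ENNReal.ofReal (f (a, q))
          ∂(((volume : Measure ℝ).restrict (Ioi 0)).prod ((volume : Measure ℝ).restrict (Ioi 0)))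
      = ∫⁻ a in Ioi (0:ℝ), ∫⁻ b in Ioi (0:ℝ), ∫⁻ c in Ioi (0:ℝ),
          ENNReal.ofReal (f (a, b, c)) := by
        apply lintegral_congr
        intro a
        exact lintegral_prod _ ((hm.comp measurable_prodMk_left).ennreal_ofReal).aemeasurable
    _ < ⊤ := hfin


-- pointwise bound for the integrand of part (ii), first stage (inner c-integral prep)
lemma f2_pt {ξ a b c : ℝ} (hξ : 0 < ξ) (ha : 0 ≤ a) (hb : 0 ≤ b) (hc : 0 ≤ c) :
    ((1 + a + b) ^ ((3:ℝ)/2))⁻¹ * ((1 + b + c) ^ ((3:ℝ)/2))⁻¹ *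
      ((Real.log (Real.exp 1 + a + b) * Real.log (Real.exp 1 + b + c)) ^ ξ)⁻¹
    ≤ ((1 + a + b) ^ (-(3:ℝ)/2) * Real.log (Real.exp 1 + a + b) ^ (-ξ) *
        Real.log (Real.exp 1 + b) ^ (-ξ)) * (((1 + b) + 1 * c) ^ (-(3:ℝ)/2)) := by
  have hL1 : (1:ℝ) ≤ Real.log (Real.exp 1 + a + b) := by
    rw [add_assoc]; exact log_ge_one (by linarith)
  have hL2 : (1:ℝ) ≤ Real.log (Real.exp 1 + b + c) := by
    rw [add_assoc]; exact log_ge_one (by linarith)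
  have hLb : (1:ℝ) ≤ Real.log (Real.exp 1 + b) := log_ge_one hb
  have hmono : Real.log (Real.exp 1 + b) ≤ Real.log (Real.exp 1 + b + c) :=
    Real.log_le_log (by positivity) (by linarith)
  have h1 : ((1 + a + b) ^ ((3:ℝ)/2))⁻¹ = (1 + a + b) ^ (-(3:ℝ)/2) := by
    rw [inv_rpow_eq (by linarith) ((3:ℝ)/2), neg_div]
  have h2 : ((1 + b + c) ^ ((3:ℝ)/2))⁻¹ = ((1 + b) + 1 * c) ^ (-(3:ℝ)/2) := by
    rw [inv_rpow_eq (by linarith) ((3:ℝ)/2), neg_div, show (1 + b + c : ℝ) = (1 + b) + 1 * c by ring]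
  have h3 : ((Real.log (Real.exp 1 + a + b) * Real.log (Real.exp 1 + b + c)) ^ ξ)⁻¹
      = Real.log (Real.exp 1 + a + b) ^ (-ξ) * Real.log (Real.exp 1 + b + c) ^ (-ξ) := by
    rw [Real.mul_rpow (by linarith) (by linarith), mul_inv,
      inv_rpow_eq (by linarith) ξ, inv_rpow_eq (by linarith) ξ]
  rw [h1, h2, h3]
  have hkey : Real.log (Real.exp 1 + b + c) ^ (-ξ) ≤ Real.log (Real.exp 1 + b) ^ (-ξ) :=
    rpow_anti (by linarith) hmono (by linarith)
  have hA : (0:ℝ) ≤ (1 + a + b) ^ (-(3:ℝ)/2) := Real.rpow_nonneg (by linarith) _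
  have hB : (0:ℝ) ≤ ((1 + b) + 1 * c) ^ (-(3:ℝ)/2) := Real.rpow_nonneg (by linarith) _
  have hC : (0:ℝ) ≤ Real.log (Real.exp 1 + a + b) ^ (-ξ) := Real.rpow_nonneg (by linarith) _
  calc (1 + a + b) ^ (-(3:ℝ)/2) * (((1 + b) + 1 * c) ^ (-(3:ℝ)/2)) *
        (Real.log (Real.exp 1 + a + b) ^ (-ξ) * Real.log (Real.exp 1 + b + c) ^ (-ξ))
      ≤ (1 + a + b) ^ (-(3:ℝ)/2) * (((1 + b) + 1 * c) ^ (-(3:ℝ)/2)) *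
        (Real.log (Real.exp 1 + a + b) ^ (-ξ) * Real.log (Real.exp 1 + b) ^ (-ξ)) := by
        apply mul_le_mul_of_nonneg_left _ (mul_nonneg hA hB)
        exact mul_le_mul_of_nonneg_left hkey hC
    _ = ((1 + a + b) ^ (-(3:ℝ)/2) * Real.log (Real.exp 1 + a + b) ^ (-ξ) *
        Real.log (Real.exp 1 + b) ^ (-ξ)) * (((1 + b) + 1 * c) ^ (-(3:ℝ)/2)) := by ring

noncomputable def K2 (ξ a b : ℝ) : ℝ :=
  (1+a+b) ^ (-(3:ℝ)/2) * Real.log (Real.exp 1 + a + b) ^ (-ξ) *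
    Real.log (Real.exp 1 + b) ^ (-ξ)

lemma K2_nonneg {ξ a b : ℝ} (ha : 0 ≤ a) (hb : 0 ≤ b) : 0 ≤ K2 ξ a b := by
  have h1 : (1:ℝ) ≤ Real.log (Real.exp 1 + a + b) := by
    rw [add_assoc]; exact log_ge_one (by linarith)
  have h2 : (1:ℝ) ≤ Real.log (Real.exp 1 + b) := log_ge_one hb
  exact mul_nonneg (mul_nonneg (Real.rpow_nonneg (by linarith) _)
    (Real.rpow_nonneg (by linarith) _)) (Real.rpow_nonneg (by linarith) _)

lemma meas_K2 {ξ : ℝ} : Measurable fun z : ℝ × ℝ => K2 ξ z.1 z.2 := by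
  have h1 : Measurable fun z : ℝ × ℝ => 1 + z.1 + z.2 :=
    (measurable_const.add measurable_fst).add measurable_snd
  have h2 : Measurable fun z : ℝ × ℝ => Real.exp 1 + z.1 + z.2 :=
    (measurable_const.add measurable_fst).add measurable_snd
  have h3 : Measurable fun z : ℝ × ℝ => Real.exp 1 + z.2 :=
    measurable_const.add measurable_snd
  exact ((h1.pow_const _).mul ((Real.measurable_log.comp h2).pow_const _)).mul
    ((Real.measurable_log.comp h3).pow_const _)

lemma hfin2 {ξ : ℝ} (hξ : 1/2 < ξ) :
    ∫⁻ a in Ioi (0:ℝ), ∫⁻ b in Ioi (0:ℝ), ∫⁻ c in Ioi (0:ℝ),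
      ENNReal.ofReal (((1 + a + b) ^ ((3:ℝ)/2))⁻¹ * ((1 + b + c) ^ ((3:ℝ)/2))⁻¹ *
        ((Real.log (Real.exp 1 + a + b) * Real.log (Real.exp 1 + b + c)) ^ ξ)⁻¹) < ⊤ := by
  have hξ0 : (0:ℝ) < ξ := by linarith
  -- the intermediate 2D function
  set G : ℝ → ℝ → ENNReal := fun a b =>
    ENNReal.ofReal (K2 ξ a b * (2/1 * (1+b) ^ (-(1:ℝ)/2))) with hG
  -- step 1 : inner integral bound
  have step1 : ∀ a ∈ Ioi (0:ℝ), ∀ b ∈ Ioi (0:ℝ),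
      ∫⁻ c in Ioi (0:ℝ), ENNReal.ofReal (((1 + a + b) ^ ((3:ℝ)/2))⁻¹ *
        ((1 + b + c) ^ ((3:ℝ)/2))⁻¹ *
        ((Real.log (Real.exp 1 + a + b) * Real.log (Real.exp 1 + b + c)) ^ ξ)⁻¹) ≤ G a b := by
    intro a ha b hb
    have ha0 : (0:ℝ) < a := ha
    have hb0 : (0:ℝ) < b := hb
    have hKnn : 0 ≤ K2 ξ a b := K2_nonneg ha0.le hb0.le
    calc ∫⁻ c in Ioi (0:ℝ), ENNReal.ofReal (((1 + a + b) ^ ((3:ℝ)/2))⁻¹ *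
            ((1 + b + c) ^ ((3:ℝ)/2))⁻¹ *
            ((Real.log (Real.exp 1 + a + b) * Real.log (Real.exp 1 + b + c)) ^ ξ)⁻¹)
        ≤ ∫⁻ c in Ioi (0:ℝ), ENNReal.ofReal (K2 ξ a b) *
            ENNReal.ofReal (((1+b) + 1*c) ^ (-(3:ℝ)/2)) := by
          refine lintegral_mono_ae ?_
          filter_upwards [ae_restrict_mem measurableSet_Ioi] with c hc
          rw [← ENNReal.ofReal_mul hKnn]
          exact ENNReal.ofReal_le_ofReal (f2_pt hξ0 ha0.le hb0.le (le_of_lt hc))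
      _ = ENNReal.ofReal (K2 ξ a b) * ENNReal.ofReal (2/1 * (1+b) ^ (-(1:ℝ)/2)) := by
          rw [lintegral_const_mul' _ _ ENNReal.ofReal_ne_top,
            lint_linear (by linarith : (0:ℝ) < 1 + b) one_pos]
      _ = G a b := by rw [hG, ← ENNReal.ofReal_mul hKnn]
  -- step 4 : a-integral of G for fixed b
  have step4 : ∀ b ∈ Ioi (0:ℝ), ∫⁻ a in Ioi (0:ℝ), G a b ≤
      ENNReal.ofReal (4 * ((1+b)⁻¹ * Real.log (Real.exp 1 + b) ^ (-(2*ξ)))) := by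
    intro b hb
    have hb0 : (0:ℝ) < b := hb
    have hLb : (1:ℝ) ≤ Real.log (Real.exp 1 + b) := log_ge_one hb0.le
    have h1b : (0:ℝ) < 1 + b := by linarith
    set C : ℝ := Real.log (Real.exp 1 + b) ^ (-ξ) * Real.log (Real.exp 1 + b) ^ (-ξ) *
      (2/1 * (1+b) ^ (-(1:ℝ)/2)) with hC
    have hCnn : 0 ≤ C := by
      apply mul_nonneg (mul_nonneg (Real.rpow_nonneg (by linarith) _)
        (Real.rpow_nonneg (by linarith) _))
      have := Real.rpow_nonneg h1b.le (-(1:ℝ)/2)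
      linarith
    calc ∫⁻ a in Ioi (0:ℝ), G a b
        ≤ ∫⁻ a in Ioi (0:ℝ), ENNReal.ofReal C *
            ENNReal.ofReal (((1+b) + 1*a) ^ (-(3:ℝ)/2)) := by
          refine lintegral_mono_ae ?_
          filter_upwards [ae_restrict_mem measurableSet_Ioi] with a ha
          have ha0 : (0:ℝ) < a := ha
          rw [hG, ← ENNReal.ofReal_mul hCnn]
          apply ENNReal.ofReal_le_ofReal
          have hbase : (1 + a + b : ℝ) = (1+b) + 1*a := by ring
          have hlog : Real.log (Real.exp 1 + b) ≤ Real.log (Real.exp 1 + a + b) :=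
            Real.log_le_log (by positivity) (by linarith)
          have hkey : Real.log (Real.exp 1 + a + b) ^ (-ξ) ≤
              Real.log (Real.exp 1 + b) ^ (-ξ) :=
            rpow_anti (by linarith) hlog (by linarith)
          have hXnn : (0:ℝ) ≤ ((1+b) + 1*a) ^ (-(3:ℝ)/2) :=
            Real.rpow_nonneg (by linarith) _
          have hLbnn : (0:ℝ) ≤ Real.log (Real.exp 1 + b) ^ (-ξ) :=
            Real.rpow_nonneg (by linarith) _
          have hvnn : (0:ℝ) ≤ 2/1 * (1+b) ^ (-(1:ℝ)/2) := by
            have := Real.rpow_nonneg h1b.le (-(1:ℝ)/2); linarith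
          calc K2 ξ a b * (2/1 * (1+b) ^ (-(1:ℝ)/2))
              = (((1+b) + 1*a) ^ (-(3:ℝ)/2) * Real.log (Real.exp 1 + a + b) ^ (-ξ)) *
                (Real.log (Real.exp 1 + b) ^ (-ξ) * (2/1 * (1+b) ^ (-(1:ℝ)/2))) := by
                rw [K2, hbase]; ring
            _ ≤ (((1+b) + 1*a) ^ (-(3:ℝ)/2) * Real.log (Real.exp 1 + b) ^ (-ξ)) *
                (Real.log (Real.exp 1 + b) ^ (-ξ) * (2/1 * (1+b) ^ (-(1:ℝ)/2))) := by
                apply mul_le_mul_of_nonneg_right _ (mul_nonneg hLbnn hvnn)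
                exact mul_le_mul_of_nonneg_left hkey hXnn
            _ = C * (((1+b) + 1*a) ^ (-(3:ℝ)/2)) := by rw [hC]; ring
      _ = ENNReal.ofReal C * ENNReal.ofReal (2/1 * (1+b) ^ (-(1:ℝ)/2)) := by
          rw [lintegral_const_mul' _ _ ENNReal.ofReal_ne_top,
            lint_linear (by linarith : (0:ℝ) < 1 + b) one_pos]
      _ = ENNReal.ofReal (4 * ((1+b)⁻¹ * Real.log (Real.exp 1 + b) ^ (-(2*ξ)))) := by
          rw [← ENNReal.ofReal_mul hCnn]
          congr 1
          have e1 : Real.log (Real.exp 1 + b) ^ (-ξ) * Real.log (Real.exp 1 + b) ^ (-ξ)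
              = Real.log (Real.exp 1 + b) ^ (-(2*ξ)) := by
            rw [← Real.rpow_add (by linarith)]; ring_nf
          have e2 : (1+b) ^ (-(1:ℝ)/2) * (1+b) ^ (-(1:ℝ)/2) = (1+b)⁻¹ := by
            rw [← Real.rpow_add h1b]
            norm_num [Real.rpow_neg_one]
          rw [hC, show Real.log (Real.exp 1 + b) ^ (-ξ) * Real.log (Real.exp 1 + b) ^ (-ξ) *
              (2/1 * (1+b) ^ (-(1:ℝ)/2)) * (2/1 * (1+b) ^ (-(1:ℝ)/2)) =
              ((1+b) ^ (-(1:ℝ)/2) * (1+b) ^ (-(1:ℝ)/2)) *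
              (Real.log (Real.exp 1 + b) ^ (-ξ) * Real.log (Real.exp 1 + b) ^ (-ξ)) * (2/1 * (2/1)) by ring,
            e1, e2]
          ring
  -- measurability of uncurried G
  have hGm : Measurable (Function.uncurry G) := by
    apply Measurable.ennreal_ofReal
    exact (meas_K2 (ξ := ξ)).mul ((measurable_const.mul
      ((measurable_const.add measurable_snd).pow_const _)).comp measurable_id)
  calc ∫⁻ a in Ioi (0:ℝ), ∫⁻ b in Ioi (0:ℝ), ∫⁻ c in Ioi (0:ℝ),
        ENNReal.ofReal (((1 + a + b) ^ ((3:ℝ)/2))⁻¹ * ((1 + b + c) ^ ((3:ℝ)/2))⁻¹ *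
          ((Real.log (Real.exp 1 + a + b) * Real.log (Real.exp 1 + b + c)) ^ ξ)⁻¹)
      ≤ ∫⁻ a in Ioi (0:ℝ), ∫⁻ b in Ioi (0:ℝ), G a b := by
        refine lintegral_mono_ae ?_
        filter_upwards [ae_restrict_mem measurableSet_Ioi] with a ha
        refine lintegral_mono_ae ?_
        filter_upwards [ae_restrict_mem measurableSet_Ioi] with b hb
        exact step1 a ha b hb
    _ = ∫⁻ b in Ioi (0:ℝ), ∫⁻ a in Ioi (0:ℝ), G a b :=
        lintegral_lintegral_swap hGm.aemeasurable
    _ ≤ ∫⁻ b in Ioi (0:ℝ),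
          ENNReal.ofReal (4 * ((1+b)⁻¹ * Real.log (Real.exp 1 + b) ^ (-(2*ξ)))) := by
        refine lintegral_mono_ae ?_
        filter_upwards [ae_restrict_mem measurableSet_Ioi] with b hb
        exact step4 b hb
    _ < ⊤ := by
        apply lint_mono_const (by norm_num : (0:ℝ) ≤ 4)
          (g := fun b => (1+b)⁻¹ * Real.log (Real.exp 1 + b) ^ (-(2*ξ)))
          (((measurable_const.add measurable_id).inv).mul
            ((Real.measurable_log.comp (measurable_const.add measurable_id)).pow_const _))
          (fun x _ => le_rfl) (lint_one_add (by linarith))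

-- measurability building blocks
lemma meas_a : Measurable fun p : ℝ × ℝ × ℝ => p.1 := measurable_fst
lemma meas_b : Measurable fun p : ℝ × ℝ × ℝ => p.2.1 := measurable_fst.comp measurable_snd
lemma meas_c : Measurable fun p : ℝ × ℝ × ℝ => p.2.2 := measurable_snd.comp measurable_snd

lemma meas_f2 {ξ : ℝ} : Measurable (fun r : ℝ × ℝ × ℝ =>
    ((1 + r.1 + r.2.1) ^ ((3:ℝ)/2))⁻¹ * ((1 + r.2.1 + r.2.2) ^ ((3:ℝ)/2))⁻¹ *
      ((Real.log (Real.exp 1 + r.1 + r.2.1) *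
          Real.log (Real.exp 1 + r.2.1 + r.2.2)) ^ ξ)⁻¹) := by
  have h1 : Measurable fun r : ℝ × ℝ × ℝ => 1 + r.1 + r.2.1 :=
    (measurable_const.add meas_a).add meas_b
  have h2 : Measurable fun r : ℝ × ℝ × ℝ => 1 + r.2.1 + r.2.2 :=
    (measurable_const.add meas_b).add meas_c
  have h3 : Measurable fun r : ℝ × ℝ × ℝ => Real.exp 1 + r.1 + r.2.1 :=
    (measurable_const.add meas_a).add meas_b
  have h4 : Measurable fun r : ℝ × ℝ × ℝ => Real.exp 1 + r.2.1 + r.2.2 :=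
    (measurable_const.add meas_b).add meas_c
  exact (((h1.pow_const _).inv.mul (h2.pow_const _).inv)).mul
    ((((Real.measurable_log.comp h3).mul (Real.measurable_log.comp h4)).pow_const _).inv)

lemma meas_f1 {ξ : ℝ} : Measurable (fun r : ℝ × ℝ × ℝ =>
    ((1 + r.1 * r.2.1 + r.1 * r.2.2 + r.2.1 * r.2.2) ^ ((3:ℝ)/2))⁻¹ *
      ((Real.log (Real.exp 1 + r.1 + r.2.1) *
          Real.log (Real.exp 1 + r.2.1 + r.2.2)) ^ ξ)⁻¹) := by
  have h1 : Measurable fun r : ℝ × ℝ × ℝ => 1 + r.1 * r.2.1 + r.1 * r.2.2 + r.2.1 * r.2.2 :=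
    (((measurable_const.add (meas_a.mul meas_b)).add (meas_a.mul meas_c)).add (meas_b.mul meas_c))
  have h3 : Measurable fun r : ℝ × ℝ × ℝ => Real.exp 1 + r.1 + r.2.1 :=
    (measurable_const.add meas_a).add meas_b
  have h4 : Measurable fun r : ℝ × ℝ × ℝ => Real.exp 1 + r.2.1 + r.2.2 :=
    (measurable_const.add meas_b).add meas_c
  exact ((h1.pow_const _).inv).mul
    ((((Real.measurable_log.comp h3).mul (Real.measurable_log.comp h4)).pow_const _).inv)

-- the 2D function after the inner c-integration (part (i))
noncomputable def Hd (ξ a b : ℝ) : ℝ :=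
  Real.log (Real.exp 1 + a + b) ^ (-ξ) * Real.log (Real.exp 1 + b) ^ (-ξ) *
    (2/(a+b) * (1 + a*b) ^ (-(1:ℝ)/2))

noncomputable def TA (a b : ℝ) : ENNReal :=
  (Ioc (0:ℝ) 1).indicator (fun x => ENNReal.ofReal (2 * x ^ (-(1:ℝ)/2))) a *
  (Ioc (0:ℝ) 1).indicator (fun y => ENNReal.ofReal (y ^ (-(1:ℝ)/2))) b

noncomputable def TB (a b : ℝ) : ENNReal :=
  (Ioi (1:ℝ)).indicator (fun x => ENNReal.ofReal (2 * x ^ (-(3:ℝ)/2))) a *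
  (Ioc (0:ℝ) 1).indicator (fun y => ENNReal.ofReal (y ^ (-(1:ℝ)/2))) b

noncomputable def TC (a b : ℝ) : ENNReal :=
  (Ioc (0:ℝ) 1).indicator (fun x => ENNReal.ofReal (2 * x ^ (-(1:ℝ)/2))) a *
  (Ioi (1:ℝ)).indicator (fun y => ENNReal.ofReal (y ^ (-(3:ℝ)/2))) b

noncomputable def TD1 (ξ a b : ℝ) : ENNReal :=
  (Ioi (1:ℝ)).indicator (fun x => ENNReal.ofReal (2 * x ^ (-(1:ℝ)/2))) a *
  (Ici a).indicator (fun y =>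
    ENNReal.ofReal (y ^ (-(3:ℝ)/2) * Real.log (Real.exp 1 + y) ^ (-(2*ξ)))) b

noncomputable def TD2 (ξ a b : ℝ) : ENNReal :=
  (Ioi (1:ℝ)).indicator (fun x =>
    ENNReal.ofReal (2 * x ^ (-(3:ℝ)/2) * Real.log (Real.exp 1 + x) ^ (-ξ))) a *
  (Icc (1:ℝ) a).indicator (fun y =>
    ENNReal.ofReal (y ^ (-(1:ℝ)/2) * Real.log (Real.exp 1 + y) ^ (-ξ))) b

lemma Hd_le {ξ a b : ℝ} (hξ : 0 < ξ) (ha : 0 < a) (hb : 0 < b) :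
    ENNReal.ofReal (Hd ξ a b) ≤ TA a b + TB a b + TC a b + TD1 ξ a b + TD2 ξ a b := by
  have hab : 0 < a + b := by linarith
  have hLab : (1:ℝ) ≤ Real.log (Real.exp 1 + a + b) := by
    rw [add_assoc]; exact log_ge_one (by linarith)
  have hLb : (1:ℝ) ≤ Real.log (Real.exp 1 + b) := log_ge_one hb.le
  have hLa : (1:ℝ) ≤ Real.log (Real.exp 1 + a) := log_ge_one ha.le
  have hLabB : Real.log (Real.exp 1 + b) ≤ Real.log (Real.exp 1 + a + b) :=
    Real.log_le_log (by positivity) (by linarith)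
  have hLabA : Real.log (Real.exp 1 + a) ≤ Real.log (Real.exp 1 + a + b) :=
    Real.log_le_log (by positivity) (by linarith)
  -- split ofReal (Hd …) into a product of four factors
  have hnn1 : (0:ℝ) ≤ Real.log (Real.exp 1 + a + b) ^ (-ξ) := Real.rpow_nonneg (by linarith) _
  have hnn2 : (0:ℝ) ≤ Real.log (Real.exp 1 + b) ^ (-ξ) := Real.rpow_nonneg (by linarith) _
  have hnn3 : (0:ℝ) ≤ 2/(a+b) := by positivity
  have hnn4 : (0:ℝ) ≤ (1 + a*b) ^ (-(1:ℝ)/2) := Real.rpow_nonneg (by positivity) _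
  have hsplit : ENNReal.ofReal (Hd ξ a b) =
      ENNReal.ofReal (Real.log (Real.exp 1 + a + b) ^ (-ξ)) *
      ENNReal.ofReal (Real.log (Real.exp 1 + b) ^ (-ξ)) *
      (ENNReal.ofReal (2/(a+b)) * ENNReal.ofReal ((1 + a*b) ^ (-(1:ℝ)/2))) := by
    rw [Hd, ENNReal.ofReal_mul (mul_nonneg hnn1 hnn2), ENNReal.ofReal_mul hnn1,
      ENNReal.ofReal_mul hnn3]
  have hone1 : ENNReal.ofReal (Real.log (Real.exp 1 + a + b) ^ (-ξ)) ≤ 1 := by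
    rw [← ENNReal.ofReal_one]
    exact ENNReal.ofReal_le_ofReal
      (Real.rpow_le_one_of_one_le_of_nonpos hLab (by linarith))
  have hone2 : ENNReal.ofReal (Real.log (Real.exp 1 + b) ^ (-ξ)) ≤ 1 := by
    rw [← ENNReal.ofReal_one]
    exact ENNReal.ofReal_le_ofReal
      (Real.rpow_le_one_of_one_le_of_nonpos hLb (by linarith))
  have hone4 : ENNReal.ofReal ((1 + a*b) ^ (-(1:ℝ)/2)) ≤ 1 := by
    rw [← ENNReal.ofReal_one]
    exact ENNReal.ofReal_le_ofReal
      (Real.rpow_le_one_of_one_le_of_nonpos (by nlinarith) (by norm_num))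
  have hprod : ENNReal.ofReal ((1 + a*b) ^ (-(1:ℝ)/2)) ≤
      ENNReal.ofReal (a ^ (-(1:ℝ)/2)) * ENNReal.ofReal (b ^ (-(1:ℝ)/2)) := by
    rw [← ENNReal.ofReal_mul (Real.rpow_nonneg ha.le _)]
    exact ENNReal.ofReal_le_ofReal (prod_ineq ha hb)
  rcases le_or_gt a 1 with hA1 | hA1
  · rcases le_or_gt b 1 with hB1 | hB1
    · -- case A
      have hTA : ENNReal.ofReal (Hd ξ a b) ≤ TA a b := by
        have e1 := Set.indicator_of_mem (s := Ioc (0:ℝ) 1)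
          (f := fun x => ENNReal.ofReal (2 * x ^ (-(1:ℝ)/2))) (mem_Ioc.mpr ⟨ha, hA1⟩)
        have e2 := Set.indicator_of_mem (s := Ioc (0:ℝ) 1)
          (f := fun y => ENNReal.ofReal (y ^ (-(1:ℝ)/2))) (mem_Ioc.mpr ⟨hb, hB1⟩)
        rw [hsplit, TA, e1, e2]
        calc ENNReal.ofReal (Real.log (Real.exp 1 + a + b) ^ (-ξ)) *
              ENNReal.ofReal (Real.log (Real.exp 1 + b) ^ (-ξ)) *
              (ENNReal.ofReal (2/(a+b)) * ENNReal.ofReal ((1 + a*b) ^ (-(1:ℝ)/2)))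
            ≤ 1 * 1 * (ENNReal.ofReal (2/(a+b)) * 1) :=
              mul_le_mul' (mul_le_mul' hone1 hone2) (mul_le_mul' le_rfl hone4)
          _ = ENNReal.ofReal (2/(a+b)) := by simp
          _ ≤ ENNReal.ofReal (2 * a ^ (-(1:ℝ)/2)) * ENNReal.ofReal (b ^ (-(1:ℝ)/2)) := by
              rw [← ENNReal.ofReal_mul (by positivity)]
              apply ENNReal.ofReal_le_ofReal
              have := sqrt_ineq ha hb
              calc 2/(a+b) = 2 * (a+b)⁻¹ := by ring
                _ ≤ 2 * (a ^ (-(1:ℝ)/2) * b ^ (-(1:ℝ)/2)) := by linarith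
                _ = 2 * a ^ (-(1:ℝ)/2) * b ^ (-(1:ℝ)/2) := by ring
      calc ENNReal.ofReal (Hd ξ a b) ≤ TA a b := hTA
        _ ≤ TA a b + TB a b + TC a b + TD1 ξ a b + TD2 ξ a b := by
          exact le_add_right (le_add_right (le_add_right (le_add_right le_rfl)))
    · -- case C : a ≤ 1 < b
      have hU : ENNReal.ofReal (2/(a+b)) ≤ ENNReal.ofReal (2 * b⁻¹) := by
        apply ENNReal.ofReal_le_ofReal
        have h := inv_anti₀ hb (by linarith : b ≤ a + b)
        calc 2/(a+b) = 2 * (a+b)⁻¹ := by ring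
          _ ≤ 2 * b⁻¹ := by linarith
      have hTC : ENNReal.ofReal (Hd ξ a b) ≤ TC a b := by
        have e1 := Set.indicator_of_mem (s := Ioc (0:ℝ) 1)
          (f := fun x => ENNReal.ofReal (2 * x ^ (-(1:ℝ)/2))) (mem_Ioc.mpr ⟨ha, hA1⟩)
        have e2 := Set.indicator_of_mem (s := Ioi (1:ℝ))
          (f := fun y => ENNReal.ofReal (y ^ (-(3:ℝ)/2))) (mem_Ioi.mpr hB1)
        rw [hsplit, TC, e1, e2]
        calc ENNReal.ofReal (Real.log (Real.exp 1 + a + b) ^ (-ξ)) *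
              ENNReal.ofReal (Real.log (Real.exp 1 + b) ^ (-ξ)) *
              (ENNReal.ofReal (2/(a+b)) * ENNReal.ofReal ((1 + a*b) ^ (-(1:ℝ)/2)))
            ≤ 1 * 1 * (ENNReal.ofReal (2 * b⁻¹) *
              (ENNReal.ofReal (a ^ (-(1:ℝ)/2)) * ENNReal.ofReal (b ^ (-(1:ℝ)/2)))) :=
              mul_le_mul' (mul_le_mul' hone1 hone2) (mul_le_mul' hU hprod)
          _ = ENNReal.ofReal (2 * a ^ (-(1:ℝ)/2)) * ENNReal.ofReal (b ^ (-(3:ℝ)/2)) := by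
              rw [one_mul, one_mul, ← ENNReal.ofReal_mul (Real.rpow_nonneg ha.le _),
                ← ENNReal.ofReal_mul (by positivity : (0:ℝ) ≤ 2 * b⁻¹),
                ← ENNReal.ofReal_mul (by positivity : (0:ℝ) ≤ 2 * a ^ (-(1:ℝ)/2))]
              congr 1
              rw [show 2 * b⁻¹ * (a ^ (-(1:ℝ)/2) * b ^ (-(1:ℝ)/2)) =
                2 * a ^ (-(1:ℝ)/2) * (b⁻¹ * b ^ (-(1:ℝ)/2)) by ring, merge_inv_half hb]
      calc ENNReal.ofReal (Hd ξ a b) ≤ TC a b := hTC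
        _ ≤ TA a b + TB a b + TC a b + TD1 ξ a b + TD2 ξ a b := by
          exact le_add_right (le_add_right (le_add_left le_rfl))
  · rcases le_or_gt b 1 with hB1 | hB1
    · -- case B : b ≤ 1 < a
      have hU : ENNReal.ofReal (2/(a+b)) ≤ ENNReal.ofReal (2 * a⁻¹) := by
        apply ENNReal.ofReal_le_ofReal
        have h := inv_anti₀ ha (by linarith : a ≤ a + b)
        calc 2/(a+b) = 2 * (a+b)⁻¹ := by ring
          _ ≤ 2 * a⁻¹ := by linarith
      have hTB : ENNReal.ofReal (Hd ξ a b) ≤ TB a b := by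
        have e1 := Set.indicator_of_mem (s := Ioi (1:ℝ))
          (f := fun x => ENNReal.ofReal (2 * x ^ (-(3:ℝ)/2))) (mem_Ioi.mpr hA1)
        have e2 := Set.indicator_of_mem (s := Ioc (0:ℝ) 1)
          (f := fun y => ENNReal.ofReal (y ^ (-(1:ℝ)/2))) (mem_Ioc.mpr ⟨hb, hB1⟩)
        rw [hsplit, TB, e1, e2]
        calc ENNReal.ofReal (Real.log (Real.exp 1 + a + b) ^ (-ξ)) *
              ENNReal.ofReal (Real.log (Real.exp 1 + b) ^ (-ξ)) *
              (ENNReal.ofReal (2/(a+b)) * ENNReal.ofReal ((1 + a*b) ^ (-(1:ℝ)/2)))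
            ≤ 1 * 1 * (ENNReal.ofReal (2 * a⁻¹) *
              (ENNReal.ofReal (a ^ (-(1:ℝ)/2)) * ENNReal.ofReal (b ^ (-(1:ℝ)/2)))) :=
              mul_le_mul' (mul_le_mul' hone1 hone2) (mul_le_mul' hU hprod)
          _ = ENNReal.ofReal (2 * a ^ (-(3:ℝ)/2)) * ENNReal.ofReal (b ^ (-(1:ℝ)/2)) := by
              rw [one_mul, one_mul, ← ENNReal.ofReal_mul (Real.rpow_nonneg ha.le _),
                ← ENNReal.ofReal_mul (by positivity : (0:ℝ) ≤ 2 * a⁻¹),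
                ← ENNReal.ofReal_mul (by positivity : (0:ℝ) ≤ 2 * a ^ (-(3:ℝ)/2))]
              congr 1
              rw [show 2 * a⁻¹ * (a ^ (-(1:ℝ)/2) * b ^ (-(1:ℝ)/2)) =
                2 * (a⁻¹ * a ^ (-(1:ℝ)/2)) * b ^ (-(1:ℝ)/2) by ring, merge_inv_half ha]
      calc ENNReal.ofReal (Hd ξ a b) ≤ TB a b := hTB
        _ ≤ TA a b + TB a b + TC a b + TD1 ξ a b + TD2 ξ a b := by
          exact le_add_right (le_add_right (le_add_right (le_add_left le_rfl)))
    · -- case D : 1 < a, 1 < b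
      rcases le_total a b with hab2 | hab2
      · -- D1 : a ≤ b
        have hU : ENNReal.ofReal (2/(a+b)) ≤ ENNReal.ofReal (2 * b⁻¹) := by
          apply ENNReal.ofReal_le_ofReal
          have h := inv_anti₀ hb (by linarith : b ≤ a + b)
          calc 2/(a+b) = 2 * (a+b)⁻¹ := by ring
            _ ≤ 2 * b⁻¹ := by linarith
        have hL1 : ENNReal.ofReal (Real.log (Real.exp 1 + a + b) ^ (-ξ)) ≤
            ENNReal.ofReal (Real.log (Real.exp 1 + b) ^ (-ξ)) :=
          ENNReal.ofReal_le_ofReal (rpow_anti (by linarith) hLabB (by linarith))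
        have hTD : ENNReal.ofReal (Hd ξ a b) ≤ TD1 ξ a b := by
          have e1 := Set.indicator_of_mem (s := Ioi (1:ℝ))
            (f := fun x => ENNReal.ofReal (2 * x ^ (-(1:ℝ)/2))) (mem_Ioi.mpr hA1)
          have e2 := Set.indicator_of_mem (s := Ici a)
            (f := fun y => ENNReal.ofReal (y ^ (-(3:ℝ)/2) *
              Real.log (Real.exp 1 + y) ^ (-(2*ξ)))) (mem_Ici.mpr hab2)
          rw [hsplit, TD1, e1, e2]
          calc ENNReal.ofReal (Real.log (Real.exp 1 + a + b) ^ (-ξ)) *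
                ENNReal.ofReal (Real.log (Real.exp 1 + b) ^ (-ξ)) *
                (ENNReal.ofReal (2/(a+b)) * ENNReal.ofReal ((1 + a*b) ^ (-(1:ℝ)/2)))
              ≤ ENNReal.ofReal (Real.log (Real.exp 1 + b) ^ (-ξ)) *
                ENNReal.ofReal (Real.log (Real.exp 1 + b) ^ (-ξ)) *
                (ENNReal.ofReal (2 * b⁻¹) *
                (ENNReal.ofReal (a ^ (-(1:ℝ)/2)) * ENNReal.ofReal (b ^ (-(1:ℝ)/2)))) :=
                mul_le_mul' (mul_le_mul' hL1 le_rfl) (mul_le_mul' hU hprod)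
            _ = ENNReal.ofReal (2 * a ^ (-(1:ℝ)/2)) *
                ENNReal.ofReal (b ^ (-(3:ℝ)/2) * Real.log (Real.exp 1 + b) ^ (-(2*ξ))) := by
                rw [← ENNReal.ofReal_mul (Real.rpow_nonneg ha.le _),
                  ← ENNReal.ofReal_mul (by positivity : (0:ℝ) ≤ 2 * b⁻¹),
                  ← ENNReal.ofReal_mul hnn2,
                  ← ENNReal.ofReal_mul (mul_nonneg hnn2 hnn2),
                  ← ENNReal.ofReal_mul (by positivity : (0:ℝ) ≤ 2 * a ^ (-(1:ℝ)/2))]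
                congr 1
                rw [show Real.log (Real.exp 1 + b) ^ (-ξ) * Real.log (Real.exp 1 + b) ^ (-ξ) *
                    (2 * b⁻¹ * (a ^ (-(1:ℝ)/2) * b ^ (-(1:ℝ)/2))) =
                  2 * a ^ (-(1:ℝ)/2) * ((b⁻¹ * b ^ (-(1:ℝ)/2)) *
                    (Real.log (Real.exp 1 + b) ^ (-ξ) * Real.log (Real.exp 1 + b) ^ (-ξ))) by ring,
                  merge_inv_half hb, merge_log (by linarith : (0:ℝ) < Real.log (Real.exp 1 + b))]
        calc ENNReal.ofReal (Hd ξ a b) ≤ TD1 ξ a b := hTD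
          _ ≤ TA a b + TB a b + TC a b + TD1 ξ a b + TD2 ξ a b := by
            exact le_add_right (le_add_left le_rfl)
      · -- D2 : b ≤ a
        have hU : ENNReal.ofReal (2/(a+b)) ≤ ENNReal.ofReal (2 * a⁻¹) := by
          apply ENNReal.ofReal_le_ofReal
          have h := inv_anti₀ ha (by linarith : a ≤ a + b)
          calc 2/(a+b) = 2 * (a+b)⁻¹ := by ring
            _ ≤ 2 * a⁻¹ := by linarith
        have hL1 : ENNReal.ofReal (Real.log (Real.exp 1 + a + b) ^ (-ξ)) ≤
            ENNReal.ofReal (Real.log (Real.exp 1 + a) ^ (-ξ)) :=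
          ENNReal.ofReal_le_ofReal (rpow_anti (by linarith) hLabA (by linarith))
        have hTD : ENNReal.ofReal (Hd ξ a b) ≤ TD2 ξ a b := by
          have e1 := Set.indicator_of_mem (s := Ioi (1:ℝ))
            (f := fun x => ENNReal.ofReal (2 * x ^ (-(3:ℝ)/2) *
              Real.log (Real.exp 1 + x) ^ (-ξ))) (mem_Ioi.mpr hA1)
          have e2 := Set.indicator_of_mem (s := Icc (1:ℝ) a)
            (f := fun y => ENNReal.ofReal (y ^ (-(1:ℝ)/2) *
              Real.log (Real.exp 1 + y) ^ (-ξ))) (mem_Icc.mpr ⟨hB1.le, hab2⟩)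
          rw [hsplit, TD2, e1, e2]
          calc ENNReal.ofReal (Real.log (Real.exp 1 + a + b) ^ (-ξ)) *
                ENNReal.ofReal (Real.log (Real.exp 1 + b) ^ (-ξ)) *
                (ENNReal.ofReal (2/(a+b)) * ENNReal.ofReal ((1 + a*b) ^ (-(1:ℝ)/2)))
              ≤ ENNReal.ofReal (Real.log (Real.exp 1 + a) ^ (-ξ)) *
                ENNReal.ofReal (Real.log (Real.exp 1 + b) ^ (-ξ)) *
                (ENNReal.ofReal (2 * a⁻¹) *
                (ENNReal.ofReal (a ^ (-(1:ℝ)/2)) * ENNReal.ofReal (b ^ (-(1:ℝ)/2)))) :=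
                mul_le_mul' (mul_le_mul' hL1 le_rfl) (mul_le_mul' hU hprod)
            _ = ENNReal.ofReal (2 * a ^ (-(3:ℝ)/2) * Real.log (Real.exp 1 + a) ^ (-ξ)) *
                ENNReal.ofReal (b ^ (-(1:ℝ)/2) * Real.log (Real.exp 1 + b) ^ (-ξ)) := by
                rw [← ENNReal.ofReal_mul (Real.rpow_nonneg ha.le _),
                  ← ENNReal.ofReal_mul (by positivity : (0:ℝ) ≤ 2 * a⁻¹),
                  ← ENNReal.ofReal_mul (Real.rpow_nonneg (by linarith : (0:ℝ) ≤ Real.log (Real.exp 1 + a)) (-ξ)),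
                  ← ENNReal.ofReal_mul (by positivity : (0:ℝ) ≤ Real.log (Real.exp 1 + a) ^ (-ξ) * Real.log (Real.exp 1 + b) ^ (-ξ)),
                  ← ENNReal.ofReal_mul (by positivity : (0:ℝ) ≤ 2 * a ^ (-(3:ℝ)/2) * Real.log (Real.exp 1 + a) ^ (-ξ))]
                congr 1
                rw [show Real.log (Real.exp 1 + a) ^ (-ξ) * Real.log (Real.exp 1 + b) ^ (-ξ) *
                    (2 * a⁻¹ * (a ^ (-(1:ℝ)/2) * b ^ (-(1:ℝ)/2))) =
                  2 * (a⁻¹ * a ^ (-(1:ℝ)/2)) * Real.log (Real.exp 1 + a) ^ (-ξ) *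
                    (b ^ (-(1:ℝ)/2) * Real.log (Real.exp 1 + b) ^ (-ξ)) by ring,
                  merge_inv_half ha]
        calc ENNReal.ofReal (Hd ξ a b) ≤ TD2 ξ a b := hTD
          _ ≤ TA a b + TB a b + TC a b + TD1 ξ a b + TD2 ξ a b := le_add_left le_rfl

lemma TD1_b {ξ : ℝ} (hξ : 0 < ξ) {a : ℝ} (ha : 0 < a) :
    ∫⁻ b in Ioi (0:ℝ), TD1 ξ a b ≤
      (Ioi (1:ℝ)).indicator
        (fun x => ENNReal.ofReal (4 * (x⁻¹ * Real.log (Real.exp 1 + x) ^ (-(2*ξ))))) a := by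
  have hψm : Measurable fun y : ℝ =>
      (Ici a).indicator (fun y =>
        ENNReal.ofReal (y ^ (-(3:ℝ)/2) * Real.log (Real.exp 1 + y) ^ (-(2*ξ)))) y :=
    (((measurable_id.pow_const _).mul mlogpow).ennreal_ofReal).indicator measurableSet_Ici
  have hpull : ∫⁻ b in Ioi (0:ℝ), TD1 ξ a b =
      (Ioi (1:ℝ)).indicator (fun x => ENNReal.ofReal (2 * x ^ (-(1:ℝ)/2))) a *
      ∫⁻ b in Ioi (0:ℝ), (Ici a).indicator (fun y =>
        ENNReal.ofReal (y ^ (-(3:ℝ)/2) * Real.log (Real.exp 1 + y) ^ (-(2*ξ)))) b := by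
    rw [← lintegral_const_mul _ hψm]
    rfl
  by_cases hA : a ∈ Ioi (1:ℝ)
  · have ha1 : (1:ℝ) < a := hA
    have hLa : (1:ℝ) ≤ Real.log (Real.exp 1 + a) := log_ge_one ha.le
    rw [hpull, Set.indicator_of_mem hA, Set.indicator_of_mem hA]
    have hinner : ∫⁻ b in Ioi (0:ℝ), (Ici a).indicator (fun y =>
        ENNReal.ofReal (y ^ (-(3:ℝ)/2) * Real.log (Real.exp 1 + y) ^ (-(2*ξ)))) b ≤
        ENNReal.ofReal (Real.log (Real.exp 1 + a) ^ (-(2*ξ))) *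
          ENNReal.ofReal (2 * a ^ (-(1:ℝ)/2)) := by
      rw [lint_ind measurableSet_Ici (fun y hy => lt_of_lt_of_le ha hy) _,
        ← restrict_Ioi_eq_restrict_Ici]
      calc ∫⁻ y in Ioi a, ENNReal.ofReal (y ^ (-(3:ℝ)/2) * Real.log (Real.exp 1 + y) ^ (-(2*ξ)))
          ≤ ∫⁻ y in Ioi a, ENNReal.ofReal (Real.log (Real.exp 1 + a) ^ (-(2*ξ))) *
              ENNReal.ofReal (y ^ (-(3:ℝ)/2)) := by
            apply lintegral_mono_ae
            filter_upwards [ae_restrict_mem measurableSet_Ioi] with y hy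
            have hya : a < y := hy
            have hy0 : (0:ℝ) < y := ha.trans hya
            rw [← ENNReal.ofReal_mul (Real.rpow_nonneg (by linarith) _)]
            apply ENNReal.ofReal_le_ofReal
            have hmon : Real.log (Real.exp 1 + a) ≤ Real.log (Real.exp 1 + y) :=
              Real.log_le_log (by positivity) (by linarith)
            have hkey : Real.log (Real.exp 1 + y) ^ (-(2*ξ)) ≤
                Real.log (Real.exp 1 + a) ^ (-(2*ξ)) :=
              rpow_anti (by linarith) hmon (by linarith)
            calc y ^ (-(3:ℝ)/2) * Real.log (Real.exp 1 + y) ^ (-(2*ξ))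
                ≤ y ^ (-(3:ℝ)/2) * Real.log (Real.exp 1 + a) ^ (-(2*ξ)) :=
                  mul_le_mul_of_nonneg_left hkey (Real.rpow_nonneg hy0.le _)
              _ = Real.log (Real.exp 1 + a) ^ (-(2*ξ)) * y ^ (-(3:ℝ)/2) := by ring
        _ = ENNReal.ofReal (Real.log (Real.exp 1 + a) ^ (-(2*ξ))) *
              ENNReal.ofReal (2 * a ^ (-(1:ℝ)/2)) := by
            rw [lintegral_const_mul _ m32, cIoi_a ha]
    calc ENNReal.ofReal (2 * a ^ (-(1:ℝ)/2)) * ∫⁻ b in Ioi (0:ℝ), (Ici a).indicator (fun y =>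
          ENNReal.ofReal (y ^ (-(3:ℝ)/2) * Real.log (Real.exp 1 + y) ^ (-(2*ξ)))) b
        ≤ ENNReal.ofReal (2 * a ^ (-(1:ℝ)/2)) *
          (ENNReal.ofReal (Real.log (Real.exp 1 + a) ^ (-(2*ξ))) *
            ENNReal.ofReal (2 * a ^ (-(1:ℝ)/2))) := mul_le_mul' le_rfl hinner
      _ = ENNReal.ofReal (4 * (a⁻¹ * Real.log (Real.exp 1 + a) ^ (-(2*ξ)))) := by
          rw [← ENNReal.ofReal_mul (Real.rpow_nonneg (by linarith) _),
            ← ENNReal.ofReal_mul (by positivity : (0:ℝ) ≤ 2 * a ^ (-(1:ℝ)/2))]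
          congr 1
          rw [show 2 * a ^ (-(1:ℝ)/2) * (Real.log (Real.exp 1 + a) ^ (-(2*ξ)) *
              (2 * a ^ (-(1:ℝ)/2))) =
            4 * ((a ^ (-(1:ℝ)/2) * a ^ (-(1:ℝ)/2)) * Real.log (Real.exp 1 + a) ^ (-(2*ξ))) by ring,
            half_half ha]
  · rw [hpull, Set.indicator_of_notMem hA, Set.indicator_of_notMem hA, zero_mul]

lemma log_sqrt {a : ℝ} (ha : 1 ≤ a) :
    Real.log (Real.exp 1 + a) ≤ 2 * Real.log (Real.exp 1 + a ^ ((1:ℝ)/2)) := by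
  have ha0 : (0:ℝ) ≤ a := by linarith
  have hsa : (0:ℝ) ≤ a ^ ((1:ℝ)/2) := Real.rpow_nonneg ha0 _
  have hsq : (a ^ ((1:ℝ)/2))^2 = a := by
    rw [← Real.rpow_natCast (a ^ ((1:ℝ)/2)) 2, ← Real.rpow_mul ha0]
    norm_num
  have he : (2.7182818283:ℝ) < Real.exp 1 := Real.exp_one_gt_d9
  have h1 : Real.exp 1 + a ≤ (Real.exp 1 + a ^ ((1:ℝ)/2))^2 := by nlinarith
  calc Real.log (Real.exp 1 + a) ≤ Real.log ((Real.exp 1 + a ^ ((1:ℝ)/2))^2) :=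
      Real.log_le_log (by positivity) h1
    _ = 2 * Real.log (Real.exp 1 + a ^ ((1:ℝ)/2)) := by
      rw [Real.log_pow]
      norm_num

lemma TD2_b {ξ : ℝ} (hξ : 0 < ξ) {a : ℝ} (ha : 0 < a) :
    ∫⁻ b in Ioi (0:ℝ), TD2 ξ a b ≤
      (Ioi (1:ℝ)).indicator (fun x => ENNReal.ofReal (4 * x ^ (-(5:ℝ)/4)) +
        ENNReal.ofReal ((4 * 2 ^ ξ) * (x⁻¹ * Real.log (Real.exp 1 + x) ^ (-(2*ξ))))) a := by
  have hψm : Measurable fun y : ℝ =>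
      (Icc (1:ℝ) a).indicator (fun y =>
        ENNReal.ofReal (y ^ (-(1:ℝ)/2) * Real.log (Real.exp 1 + y) ^ (-ξ))) y :=
    (((measurable_id.pow_const _).mul mlogpow).ennreal_ofReal).indicator measurableSet_Icc
  have hpull : ∫⁻ b in Ioi (0:ℝ), TD2 ξ a b =
      (Ioi (1:ℝ)).indicator (fun x =>
        ENNReal.ofReal (2 * x ^ (-(3:ℝ)/2) * Real.log (Real.exp 1 + x) ^ (-ξ))) a *
      ∫⁻ b in Ioi (0:ℝ), (Icc (1:ℝ) a).indicator (fun y =>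
        ENNReal.ofReal (y ^ (-(1:ℝ)/2) * Real.log (Real.exp 1 + y) ^ (-ξ))) b := by
    rw [← lintegral_const_mul _ hψm]
    rfl
  by_cases hA : a ∈ Ioi (1:ℝ)
  · have ha1 : (1:ℝ) < a := hA
    have hLa : (1:ℝ) ≤ Real.log (Real.exp 1 + a) := log_ge_one ha.le
    have hLa0 : (0:ℝ) < Real.log (Real.exp 1 + a) := by linarith
    set sa : ℝ := a ^ ((1:ℝ)/2) with hsa_def
    have hsa0 : (0:ℝ) < sa := Real.rpow_pos_of_pos ha _
    have hsa1 : (1:ℝ) ≤ sa := by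
      have := Real.rpow_le_rpow (zero_le_one) ha1.le (by norm_num : (0:ℝ) ≤ (1:ℝ)/2)
      simpa [hsa_def] using this
    have hsaa : sa ≤ a := by
      have := Real.rpow_le_rpow_of_exponent_le ha1.le (by norm_num : (1:ℝ)/2 ≤ 1)
      simpa [hsa_def] using this
    -- pointwise split of the inner indicator function
    have hsplit : ∀ y : ℝ, (Icc (1:ℝ) a).indicator (fun y =>
          ENNReal.ofReal (y ^ (-(1:ℝ)/2) * Real.log (Real.exp 1 + y) ^ (-ξ))) y ≤
        (Ioc (0:ℝ) sa).indicator (fun y => ENNReal.ofReal (y ^ (-(1:ℝ)/2))) y +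
        (Ioc sa a).indicator (fun y =>
          ENNReal.ofReal ((2 ^ ξ * Real.log (Real.exp 1 + a) ^ (-ξ)) * y ^ (-(1:ℝ)/2))) y := by
      intro y
      by_cases hy : y ∈ Icc (1:ℝ) a
      · have hy1 : (1:ℝ) ≤ y := hy.1
        have hy0 : (0:ℝ) < y := by linarith
        have hLy : (1:ℝ) ≤ Real.log (Real.exp 1 + y) := log_ge_one (by linarith)
        rw [Set.indicator_of_mem hy]
        rcases le_or_gt y sa with hcase | hcase
        · have hmem : y ∈ Ioc (0:ℝ) sa := ⟨hy0, hcase⟩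
          refine le_trans ?_ le_self_add
          rw [Set.indicator_of_mem hmem]
          apply ENNReal.ofReal_le_ofReal
          calc y ^ (-(1:ℝ)/2) * Real.log (Real.exp 1 + y) ^ (-ξ)
              ≤ y ^ (-(1:ℝ)/2) * 1 :=
                mul_le_mul_of_nonneg_left
                  (Real.rpow_le_one_of_one_le_of_nonpos hLy (by linarith))
                  (Real.rpow_nonneg hy0.le _)
            _ = y ^ (-(1:ℝ)/2) := mul_one _
        · have hmem : y ∈ Ioc sa a := ⟨hcase, hy.2⟩
          refine le_trans ?_ le_add_self
          rw [Set.indicator_of_mem hmem]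
          apply ENNReal.ofReal_le_ofReal
          have hmon : Real.log (Real.exp 1 + sa) ≤ Real.log (Real.exp 1 + y) :=
            Real.log_le_log (by positivity) (by linarith)
          have hhalf : Real.log (Real.exp 1 + a) / 2 ≤ Real.log (Real.exp 1 + y) := by
            have := log_sqrt ha1.le
            rw [← hsa_def] at this
            linarith
          have hkey : Real.log (Real.exp 1 + y) ^ (-ξ) ≤
              (Real.log (Real.exp 1 + a) / 2) ^ (-ξ) :=
            rpow_anti (by linarith) hhalf (by linarith)
          have heq : (Real.log (Real.exp 1 + a) / 2) ^ (-ξ) =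
              2 ^ ξ * Real.log (Real.exp 1 + a) ^ (-ξ) := by
            rw [Real.div_rpow (by linarith) (by norm_num), Real.rpow_neg (by norm_num : (0:ℝ) ≤ 2),
              div_inv_eq_mul]
            ring
          calc y ^ (-(1:ℝ)/2) * Real.log (Real.exp 1 + y) ^ (-ξ)
              ≤ y ^ (-(1:ℝ)/2) * (2 ^ ξ * Real.log (Real.exp 1 + a) ^ (-ξ)) := by
                apply mul_le_mul_of_nonneg_left _ (Real.rpow_nonneg hy0.le _)
                rw [← heq]
                exact hkey
            _ = (2 ^ ξ * Real.log (Real.exp 1 + a) ^ (-ξ)) * y ^ (-(1:ℝ)/2) := by ring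
      · rw [Set.indicator_of_notMem hy]
        exact zero_le
    -- bound the inner integral
    have hinner : ∫⁻ b in Ioi (0:ℝ), (Icc (1:ℝ) a).indicator (fun y =>
        ENNReal.ofReal (y ^ (-(1:ℝ)/2) * Real.log (Real.exp 1 + y) ^ (-ξ))) b ≤
        ENNReal.ofReal (2 * a ^ ((1:ℝ)/4)) +
        ENNReal.ofReal (2 ^ ξ * Real.log (Real.exp 1 + a) ^ (-ξ)) *
          ENNReal.ofReal (2 * a ^ ((1:ℝ)/2)) := by
      calc ∫⁻ b in Ioi (0:ℝ), (Icc (1:ℝ) a).indicator (fun y =>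
            ENNReal.ofReal (y ^ (-(1:ℝ)/2) * Real.log (Real.exp 1 + y) ^ (-ξ))) b
          ≤ ∫⁻ b in Ioi (0:ℝ),
              ((Ioc (0:ℝ) sa).indicator (fun y => ENNReal.ofReal (y ^ (-(1:ℝ)/2))) b +
              (Ioc sa a).indicator (fun y =>
                ENNReal.ofReal ((2 ^ ξ * Real.log (Real.exp 1 + a) ^ (-ξ)) *
                  y ^ (-(1:ℝ)/2))) b) :=
            lintegral_mono fun y => hsplit y
        _ = (∫⁻ b in Ioi (0:ℝ), (Ioc (0:ℝ) sa).indicator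
              (fun y => ENNReal.ofReal (y ^ (-(1:ℝ)/2))) b) +
            ∫⁻ b in Ioi (0:ℝ), (Ioc sa a).indicator (fun y =>
              ENNReal.ofReal ((2 ^ ξ * Real.log (Real.exp 1 + a) ^ (-ξ)) *
                y ^ (-(1:ℝ)/2))) b :=
            lintegral_add_left (mhalf.indicator measurableSet_Ioc) _
        _ ≤ ENNReal.ofReal (2 * a ^ ((1:ℝ)/4)) +
            ENNReal.ofReal (2 ^ ξ * Real.log (Real.exp 1 + a) ^ (-ξ)) *
              ENNReal.ofReal (2 * a ^ ((1:ℝ)/2)) := by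
            apply add_le_add
            · rw [lint_ind measurableSet_Ioc (fun y hy => hy.1) _, lint_rpow_Ioc hsa0.le]
              apply le_of_eq
              congr 1
              rw [hsa_def, ← Real.rpow_mul ha.le]
              norm_num
            · rw [lint_ind measurableSet_Ioc (fun y hy => lt_trans hsa0 hy.1) _]
              calc ∫⁻ y in Ioc sa a, ENNReal.ofReal ((2 ^ ξ *
                    Real.log (Real.exp 1 + a) ^ (-ξ)) * y ^ (-(1:ℝ)/2))
                  ≤ ∫⁻ y in Ioc 0 a, ENNReal.ofReal ((2 ^ ξ *
                    Real.log (Real.exp 1 + a) ^ (-ξ)) * y ^ (-(1:ℝ)/2)) :=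
                    lintegral_mono' (Measure.restrict_mono (Ioc_subset_Ioc_left hsa0.le) le_rfl)
                      le_rfl
                _ = ENNReal.ofReal (2 ^ ξ * Real.log (Real.exp 1 + a) ^ (-ξ)) *
                    ENNReal.ofReal (2 * a ^ ((1:ℝ)/2)) := by
                    rw [← lint_rpow_Ioc ha.le, ← lintegral_const_mul _ mhalf]
                    apply lintegral_congr
                    intro y
                    rw [← ENNReal.ofReal_mul (by positivity)]
      -- end hinner
    rw [hpull, Set.indicator_of_mem hA, Set.indicator_of_mem hA]
    calc ENNReal.ofReal (2 * a ^ (-(3:ℝ)/2) * Real.log (Real.exp 1 + a) ^ (-ξ)) *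
          ∫⁻ b in Ioi (0:ℝ), (Icc (1:ℝ) a).indicator (fun y =>
            ENNReal.ofReal (y ^ (-(1:ℝ)/2) * Real.log (Real.exp 1 + y) ^ (-ξ))) b
        ≤ ENNReal.ofReal (2 * a ^ (-(3:ℝ)/2) * Real.log (Real.exp 1 + a) ^ (-ξ)) *
          (ENNReal.ofReal (2 * a ^ ((1:ℝ)/4)) +
            ENNReal.ofReal (2 ^ ξ * Real.log (Real.exp 1 + a) ^ (-ξ)) *
              ENNReal.ofReal (2 * a ^ ((1:ℝ)/2))) := mul_le_mul' le_rfl hinner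
      _ ≤ ENNReal.ofReal (4 * a ^ (-(5:ℝ)/4)) +
          ENNReal.ofReal ((4 * 2 ^ ξ) * (a⁻¹ * Real.log (Real.exp 1 + a) ^ (-(2*ξ)))) := by
          rw [mul_add]
          apply add_le_add
          · rw [← ENNReal.ofReal_mul (by positivity)]
            apply ENNReal.ofReal_le_ofReal
            have hmerge : a ^ (-(3:ℝ)/2) * a ^ ((1:ℝ)/4) = a ^ (-(5:ℝ)/4) := by
              rw [← Real.rpow_add ha]
              norm_num
            calc 2 * a ^ (-(3:ℝ)/2) * Real.log (Real.exp 1 + a) ^ (-ξ) * (2 * a ^ ((1:ℝ)/4))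
                = 4 * (a ^ (-(3:ℝ)/2) * a ^ ((1:ℝ)/4)) * Real.log (Real.exp 1 + a) ^ (-ξ) := by
                  ring
              _ = 4 * a ^ (-(5:ℝ)/4) * Real.log (Real.exp 1 + a) ^ (-ξ) := by rw [hmerge]
              _ ≤ 4 * a ^ (-(5:ℝ)/4) * 1 := by
                  apply mul_le_mul_of_nonneg_left
                    (Real.rpow_le_one_of_one_le_of_nonpos hLa (by linarith))
                  positivity
              _ = 4 * a ^ (-(5:ℝ)/4) := mul_one _
          · rw [← ENNReal.ofReal_mul (by positivity), ← ENNReal.ofReal_mul (by positivity)]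
            apply ENNReal.ofReal_le_ofReal
            apply le_of_eq
            have hmerge1 : a ^ (-(3:ℝ)/2) * a ^ ((1:ℝ)/2) = a⁻¹ := by
              rw [← Real.rpow_add ha]
              norm_num [Real.rpow_neg_one]
            have hmerge2 : Real.log (Real.exp 1 + a) ^ (-ξ) *
                Real.log (Real.exp 1 + a) ^ (-ξ) = Real.log (Real.exp 1 + a) ^ (-(2*ξ)) := by
              rw [← Real.rpow_add hLa0]
              ring_nf
            calc 2 * a ^ (-(3:ℝ)/2) * Real.log (Real.exp 1 + a) ^ (-ξ) *
                  (2 ^ ξ * Real.log (Real.exp 1 + a) ^ (-ξ) * (2 * a ^ ((1:ℝ)/2)))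
                = (4 * 2 ^ ξ) * ((a ^ (-(3:ℝ)/2) * a ^ ((1:ℝ)/2)) *
                  (Real.log (Real.exp 1 + a) ^ (-ξ) * Real.log (Real.exp 1 + a) ^ (-ξ))) := by
                  ring
              _ = (4 * 2 ^ ξ) * (a⁻¹ * Real.log (Real.exp 1 + a) ^ (-(2*ξ))) := by
                  rw [hmerge1, hmerge2]
  · rw [hpull, Set.indicator_of_notMem hA, Set.indicator_of_notMem hA, zero_mul]

lemma TA_b (a : ℝ) : ∫⁻ b in Ioi (0:ℝ), TA a b =
    (Ioc (0:ℝ) 1).indicator (fun x => ENNReal.ofReal (2 * x ^ (-(1:ℝ)/2))) a *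
      ENNReal.ofReal 2 := by
  rw [show (fun b => TA a b) = fun b => (Ioc (0:ℝ) 1).indicator
      (fun x => ENNReal.ofReal (2 * x ^ (-(1:ℝ)/2))) a *
      (Ioc (0:ℝ) 1).indicator (fun y => ENNReal.ofReal (y ^ (-(1:ℝ)/2))) b from rfl,
    lintegral_const_mul _ (mhalf.indicator measurableSet_Ioc),
    lint_ind measurableSet_Ioc (fun y hy => hy.1) _, cIoc1]

lemma TB_b (a : ℝ) : ∫⁻ b in Ioi (0:ℝ), TB a b =
    (Ioi (1:ℝ)).indicator (fun x => ENNReal.ofReal (2 * x ^ (-(3:ℝ)/2))) a *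
      ENNReal.ofReal 2 := by
  rw [show (fun b => TB a b) = fun b => (Ioi (1:ℝ)).indicator
      (fun x => ENNReal.ofReal (2 * x ^ (-(3:ℝ)/2))) a *
      (Ioc (0:ℝ) 1).indicator (fun y => ENNReal.ofReal (y ^ (-(1:ℝ)/2))) b from rfl,
    lintegral_const_mul _ (mhalf.indicator measurableSet_Ioc),
    lint_ind measurableSet_Ioc (fun y hy => hy.1) _, cIoc1]

lemma TC_b (a : ℝ) : ∫⁻ b in Ioi (0:ℝ), TC a b =
    (Ioc (0:ℝ) 1).indicator (fun x => ENNReal.ofReal (2 * x ^ (-(1:ℝ)/2))) a *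
      ENNReal.ofReal 2 := by
  rw [show (fun b => TC a b) = fun b => (Ioc (0:ℝ) 1).indicator
      (fun x => ENNReal.ofReal (2 * x ^ (-(1:ℝ)/2))) a *
      (Ioi (1:ℝ)).indicator (fun y => ENNReal.ofReal (y ^ (-(3:ℝ)/2))) b from rfl,
    lintegral_const_mul _ (m32.indicator measurableSet_Ioi),
    lint_ind measurableSet_Ioi (fun y hy => Set.mem_Ioi.2 (lt_trans one_pos hy)) _, cIoi1]

lemma hfin1 {ξ : ℝ} (hξ : 1/2 < ξ) :
    ∫⁻ a in Ioi (0:ℝ), ∫⁻ b in Ioi (0:ℝ), ENNReal.ofReal (Hd ξ a b) < ⊤ := by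
  have hξ0 : (0:ℝ) < ξ := by linarith
  set Φ : ℝ → ENNReal := fun a =>
    (Ioc (0:ℝ) 1).indicator (fun x => ENNReal.ofReal (2 * x ^ (-(1:ℝ)/2))) a *
      ENNReal.ofReal 2 +
    (Ioi (1:ℝ)).indicator (fun x => ENNReal.ofReal (2 * x ^ (-(3:ℝ)/2))) a *
      ENNReal.ofReal 2 +
    (Ioc (0:ℝ) 1).indicator (fun x => ENNReal.ofReal (2 * x ^ (-(1:ℝ)/2))) a *
      ENNReal.ofReal 2 +
    (Ioi (1:ℝ)).indicator
      (fun x => ENNReal.ofReal (4 * (x⁻¹ * Real.log (Real.exp 1 + x) ^ (-(2*ξ))))) a +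
    (Ioi (1:ℝ)).indicator (fun x => ENNReal.ofReal (4 * x ^ (-(5:ℝ)/4)) +
      ENNReal.ofReal ((4 * 2 ^ ξ) * (x⁻¹ * Real.log (Real.exp 1 + x) ^ (-(2*ξ))))) a
      with hΦ
  have hstep : ∀ a ∈ Ioi (0:ℝ), ∫⁻ b in Ioi (0:ℝ), ENNReal.ofReal (Hd ξ a b) ≤ Φ a := by
    intro a ha
    have ha0 : (0:ℝ) < a := ha
    have m1 : Measurable fun b => TA a b :=
      (measurable_const.mul (mhalf.indicator measurableSet_Ioc))
    have m2 : Measurable fun b => TB a b :=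
      (measurable_const.mul (mhalf.indicator measurableSet_Ioc))
    have m3 : Measurable fun b => TC a b :=
      (measurable_const.mul (m32.indicator measurableSet_Ioi))
    have m4 : Measurable fun b => TD1 ξ a b :=
      (measurable_const.mul ((((measurable_id.pow_const _).mul
        mlogpow).ennreal_ofReal).indicator measurableSet_Ici))
    calc ∫⁻ b in Ioi (0:ℝ), ENNReal.ofReal (Hd ξ a b)
        ≤ ∫⁻ b in Ioi (0:ℝ), (TA a b + TB a b + TC a b + TD1 ξ a b + TD2 ξ a b) := by
          apply lintegral_mono_ae
          filter_upwards [ae_restrict_mem measurableSet_Ioi] with b hb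
          exact Hd_le hξ0 ha0 hb
      _ = (∫⁻ b in Ioi (0:ℝ), TA a b) + (∫⁻ b in Ioi (0:ℝ), TB a b) +
          (∫⁻ b in Ioi (0:ℝ), TC a b) + (∫⁻ b in Ioi (0:ℝ), TD1 ξ a b) +
          (∫⁻ b in Ioi (0:ℝ), TD2 ξ a b) := by
          rw [lintegral_add_left (f := fun b => TA a b + TB a b + TC a b + TD1 ξ a b)
              (((m1.add m2).add m3).add m4),
            lintegral_add_left (f := fun b => TA a b + TB a b + TC a b) ((m1.add m2).add m3),
            lintegral_add_left (f := fun b => TA a b + TB a b) (m1.add m2),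
            lintegral_add_left m1]
      _ ≤ Φ a := by
          rw [hΦ, TA_b, TB_b, TC_b]
          exact add_le_add (add_le_add le_rfl (TD1_b hξ0 ha0)) (TD2_b hξ0 ha0)
  have mIoc : Measurable fun x : ℝ =>
      (Ioc (0:ℝ) 1).indicator (fun x => ENNReal.ofReal (2 * x ^ (-(1:ℝ)/2))) x *
        ENNReal.ofReal 2 :=
    (((measurable_const.mul (measurable_id.pow_const _)).ennreal_ofReal).indicator
      measurableSet_Ioc).mul_const _
  have mIoi : Measurable fun x : ℝ =>
      (Ioi (1:ℝ)).indicator (fun x => ENNReal.ofReal (2 * x ^ (-(3:ℝ)/2))) x *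
        ENNReal.ofReal 2 :=
    (((measurable_const.mul (measurable_id.pow_const _)).ennreal_ofReal).indicator
      measurableSet_Ioi).mul_const _
  have mD1 : Measurable fun x : ℝ => (Ioi (1:ℝ)).indicator
      (fun x => ENNReal.ofReal (4 * (x⁻¹ * Real.log (Real.exp 1 + x) ^ (-(2*ξ))))) x :=
    ((measurable_const.mul (measurable_inv.mul mlogpow)).ennreal_ofReal).indicator
      measurableSet_Ioi
  -- finiteness of the elementary pieces
  have fin1 : ∫⁻ a in Ioi (0:ℝ), (Ioc (0:ℝ) 1).indicator
      (fun x => ENNReal.ofReal (2 * x ^ (-(1:ℝ)/2))) a * ENNReal.ofReal 2 < ⊤ := by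
    rw [lintegral_mul_const' _ _ ENNReal.ofReal_ne_top,
      lint_ind measurableSet_Ioc (fun y hy => hy.1) _, lint_cmul (by norm_num) mhalf, cIoc1]
    exact ENNReal.mul_lt_top (ENNReal.mul_lt_top ENNReal.ofReal_lt_top ENNReal.ofReal_lt_top)
      ENNReal.ofReal_lt_top
  have fin2 : ∫⁻ a in Ioi (0:ℝ), (Ioi (1:ℝ)).indicator
      (fun x => ENNReal.ofReal (2 * x ^ (-(3:ℝ)/2))) a * ENNReal.ofReal 2 < ⊤ := by
    rw [lintegral_mul_const' _ _ ENNReal.ofReal_ne_top,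
      lint_ind measurableSet_Ioi (fun y hy => Set.mem_Ioi.2 (lt_trans one_pos hy)) _,
      lint_cmul (by norm_num) m32, cIoi1]
    exact ENNReal.mul_lt_top (ENNReal.mul_lt_top ENNReal.ofReal_lt_top ENNReal.ofReal_lt_top)
      ENNReal.ofReal_lt_top
  have fin4 : ∫⁻ a in Ioi (0:ℝ), (Ioi (1:ℝ)).indicator
      (fun x => ENNReal.ofReal (4 * (x⁻¹ * Real.log (Real.exp 1 + x) ^ (-(2*ξ))))) a < ⊤ := by
    rw [lint_ind measurableSet_Ioi (fun y hy => Set.mem_Ioi.2 (lt_trans one_pos hy)) _]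
    exact lint_mono_const (by norm_num : (0:ℝ) ≤ 4)
      (measurable_inv.mul mlogpow) (fun x _ => le_rfl) (lint_one_div (by linarith))
  have fin5 : ∫⁻ a in Ioi (0:ℝ), (Ioi (1:ℝ)).indicator
      (fun x => ENNReal.ofReal (4 * x ^ (-(5:ℝ)/4)) +
        ENNReal.ofReal ((4 * 2 ^ ξ) * (x⁻¹ * Real.log (Real.exp 1 + x) ^ (-(2*ξ))))) a < ⊤ := by
    rw [lint_ind measurableSet_Ioi (fun y hy => Set.mem_Ioi.2 (lt_trans one_pos hy)) _,
      lintegral_add_left m54']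
    apply ENNReal.add_lt_top.mpr
    constructor
    · rw [lint_cmul (by norm_num) m54,
        lint_rpow_Ioi (by norm_num : (-(5:ℝ)/4) < -1) one_pos]
      exact ENNReal.mul_lt_top ENNReal.ofReal_lt_top ENNReal.ofReal_lt_top
    · exact lint_mono_const (by positivity : (0:ℝ) ≤ 4 * 2 ^ ξ)
        (measurable_inv.mul mlogpow) (fun x _ => le_rfl) (lint_one_div (by linarith))
  calc ∫⁻ a in Ioi (0:ℝ), ∫⁻ b in Ioi (0:ℝ), ENNReal.ofReal (Hd ξ a b)
      ≤ ∫⁻ a in Ioi (0:ℝ), Φ a := by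
        apply lintegral_mono_ae
        filter_upwards [ae_restrict_mem measurableSet_Ioi] with a ha
        exact hstep a ha
    _ < ⊤ := by
        rw [hΦ]
        beta_reduce
        rw [lintegral_add_left (((mIoc.fun_add mIoi).fun_add mIoc).fun_add mD1),
          lintegral_add_left ((mIoc.fun_add mIoi).fun_add mIoc),
          lintegral_add_left (mIoc.fun_add mIoi), lintegral_add_left mIoc]
        exact ENNReal.add_lt_top.mpr ⟨ENNReal.add_lt_top.mpr ⟨ENNReal.add_lt_top.mpr
          ⟨ENNReal.add_lt_top.mpr ⟨fin1, fin2⟩, fin1⟩, fin4⟩, fin5⟩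

-- pointwise bound for the integrand of part (i), first stage
lemma f1_pt {ξ a b c : ℝ} (hξ : 0 < ξ) (ha : 0 ≤ a) (hb : 0 ≤ b) (hc : 0 ≤ c) :
    ((1 + a*b + a*c + b*c) ^ ((3:ℝ)/2))⁻¹ *
      ((Real.log (Real.exp 1 + a + b) * Real.log (Real.exp 1 + b + c)) ^ ξ)⁻¹
    ≤ (Real.log (Real.exp 1 + a + b) ^ (-ξ) * Real.log (Real.exp 1 + b) ^ (-ξ)) *
        (((1 + a*b) + (a+b)*c) ^ (-(3:ℝ)/2)) := by
  have hL1 : (1:ℝ) ≤ Real.log (Real.exp 1 + a + b) := by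
    rw [add_assoc]; exact log_ge_one (by linarith)
  have hL2 : (1:ℝ) ≤ Real.log (Real.exp 1 + b + c) := by
    rw [add_assoc]; exact log_ge_one (by linarith)
  have hLb : (1:ℝ) ≤ Real.log (Real.exp 1 + b) := log_ge_one hb
  have hmono : Real.log (Real.exp 1 + b) ≤ Real.log (Real.exp 1 + b + c) :=
    Real.log_le_log (by positivity) (by linarith)
  have hab : (0:ℝ) ≤ a*b := mul_nonneg ha hb
  have hac : (0:ℝ) ≤ a*c := mul_nonneg ha hc
  have hbc : (0:ℝ) ≤ b*c := mul_nonneg hb hc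
  have h1 : ((1 + a*b + a*c + b*c) ^ ((3:ℝ)/2))⁻¹ = ((1 + a*b) + (a+b)*c) ^ (-(3:ℝ)/2) := by
    rw [inv_rpow_eq (by linarith) ((3:ℝ)/2), neg_div,
      show (1 + a*b + a*c + b*c : ℝ) = (1 + a*b) + (a+b)*c by ring]
  have h3 : ((Real.log (Real.exp 1 + a + b) * Real.log (Real.exp 1 + b + c)) ^ ξ)⁻¹
      = Real.log (Real.exp 1 + a + b) ^ (-ξ) * Real.log (Real.exp 1 + b + c) ^ (-ξ) := by
    rw [Real.mul_rpow (by linarith) (by linarith), mul_inv,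
      inv_rpow_eq (by linarith) ξ, inv_rpow_eq (by linarith) ξ]
  rw [h1, h3]
  have hkey : Real.log (Real.exp 1 + b + c) ^ (-ξ) ≤ Real.log (Real.exp 1 + b) ^ (-ξ) :=
    rpow_anti (by linarith) hmono (by linarith)
  have hB : (0:ℝ) ≤ ((1 + a*b) + (a+b)*c) ^ (-(3:ℝ)/2) := Real.rpow_nonneg (by nlinarith) _
  have hC : (0:ℝ) ≤ Real.log (Real.exp 1 + a + b) ^ (-ξ) := Real.rpow_nonneg (by linarith) _
  calc ((1 + a*b) + (a+b)*c) ^ (-(3:ℝ)/2) *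
        (Real.log (Real.exp 1 + a + b) ^ (-ξ) * Real.log (Real.exp 1 + b + c) ^ (-ξ))
      ≤ ((1 + a*b) + (a+b)*c) ^ (-(3:ℝ)/2) *
        (Real.log (Real.exp 1 + a + b) ^ (-ξ) * Real.log (Real.exp 1 + b) ^ (-ξ)) := by
        apply mul_le_mul_of_nonneg_left _ hB
        exact mul_le_mul_of_nonneg_left hkey hC
    _ = (Real.log (Real.exp 1 + a + b) ^ (-ξ) * Real.log (Real.exp 1 + b) ^ (-ξ)) *
        (((1 + a*b) + (a+b)*c) ^ (-(3:ℝ)/2)) := by ring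

lemma hfin1_full {ξ : ℝ} (hξ : 1/2 < ξ) :
    ∫⁻ a in Ioi (0:ℝ), ∫⁻ b in Ioi (0:ℝ), ∫⁻ c in Ioi (0:ℝ),
      ENNReal.ofReal (((1 + a*b + a*c + b*c) ^ ((3:ℝ)/2))⁻¹ *
        ((Real.log (Real.exp 1 + a + b) * Real.log (Real.exp 1 + b + c)) ^ ξ)⁻¹) < ⊤ := by
  have hξ0 : (0:ℝ) < ξ := by linarith
  have step1 : ∀ a ∈ Ioi (0:ℝ), ∀ b ∈ Ioi (0:ℝ),
      ∫⁻ c in Ioi (0:ℝ), ENNReal.ofReal (((1 + a*b + a*c + b*c) ^ ((3:ℝ)/2))⁻¹ *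
        ((Real.log (Real.exp 1 + a + b) * Real.log (Real.exp 1 + b + c)) ^ ξ)⁻¹) ≤
        ENNReal.ofReal (Hd ξ a b) := by
    intro a ha b hb
    have ha0 : (0:ℝ) < a := ha
    have hb0 : (0:ℝ) < b := hb
    have hL1 : (1:ℝ) ≤ Real.log (Real.exp 1 + a + b) := by
      rw [add_assoc]; exact log_ge_one (by linarith)
    have hLb : (1:ℝ) ≤ Real.log (Real.exp 1 + b) := log_ge_one hb0.le
    have hKnn : (0:ℝ) ≤ Real.log (Real.exp 1 + a + b) ^ (-ξ) *
        Real.log (Real.exp 1 + b) ^ (-ξ) :=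
      mul_nonneg (Real.rpow_nonneg (by linarith) _) (Real.rpow_nonneg (by linarith) _)
    calc ∫⁻ c in Ioi (0:ℝ), ENNReal.ofReal (((1 + a*b + a*c + b*c) ^ ((3:ℝ)/2))⁻¹ *
            ((Real.log (Real.exp 1 + a + b) * Real.log (Real.exp 1 + b + c)) ^ ξ)⁻¹)
        ≤ ∫⁻ c in Ioi (0:ℝ), ENNReal.ofReal (Real.log (Real.exp 1 + a + b) ^ (-ξ) *
            Real.log (Real.exp 1 + b) ^ (-ξ)) *
            ENNReal.ofReal (((1 + a*b) + (a+b)*c) ^ (-(3:ℝ)/2)) := by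
          refine lintegral_mono_ae ?_
          filter_upwards [ae_restrict_mem measurableSet_Ioi] with c hc
          rw [← ENNReal.ofReal_mul hKnn]
          exact ENNReal.ofReal_le_ofReal (f1_pt hξ0 ha0.le hb0.le (le_of_lt hc))
      _ = ENNReal.ofReal (Real.log (Real.exp 1 + a + b) ^ (-ξ) *
            Real.log (Real.exp 1 + b) ^ (-ξ)) *
            ENNReal.ofReal (2/(a+b) * (1 + a*b) ^ (-(1:ℝ)/2)) := by
          rw [lintegral_const_mul' _ _ ENNReal.ofReal_ne_top,
            lint_linear (by nlinarith : (0:ℝ) < 1 + a*b) (by linarith : (0:ℝ) < a + b)]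
      _ = ENNReal.ofReal (Hd ξ a b) := by
          rw [Hd, ← ENNReal.ofReal_mul hKnn]
  calc ∫⁻ a in Ioi (0:ℝ), ∫⁻ b in Ioi (0:ℝ), ∫⁻ c in Ioi (0:ℝ),
        ENNReal.ofReal (((1 + a*b + a*c + b*c) ^ ((3:ℝ)/2))⁻¹ *
          ((Real.log (Real.exp 1 + a + b) * Real.log (Real.exp 1 + b + c)) ^ ξ)⁻¹)
      ≤ ∫⁻ a in Ioi (0:ℝ), ∫⁻ b in Ioi (0:ℝ), ENNReal.ofReal (Hd ξ a b) := by
        refine lintegral_mono_ae ?_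
        filter_upwards [ae_restrict_mem measurableSet_Ioi] with a ha
        refine lintegral_mono_ae ?_
        filter_upwards [ae_restrict_mem measurableSet_Ioi] with b hb
        exact step1 a ha b hb
    _ < ⊤ := hfin1 hξ

end Stmt19Aux

open Stmt19Aux in
/-- For every `ξ > 1/2`, the two triple integrals over `[0,∞)³` appearing in the proof of
the variance bound (7.6)–(7.7) are finite, i.e. the integrands are integrable on
`[0,∞)³`. -/
theorem stmt19 (ξ : ℝ) (hξ : 1 / 2 < ξ) :
    IntegrableOn
      (fun r : ℝ × ℝ × ℝ =>
        ((1 + r.1 * r.2.1 + r.1 * r.2.2 + r.2.1 * r.2.2) ^ ((3:ℝ) / 2))⁻¹ *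
          ((Real.log (Real.exp 1 + r.1 + r.2.1) *
              Real.log (Real.exp 1 + r.2.1 + r.2.2)) ^ ξ)⁻¹)
      (Set.Ici (0:ℝ) ×ˢ Set.Ici (0:ℝ) ×ˢ Set.Ici (0:ℝ)) volume ∧
    IntegrableOn
      (fun r : ℝ × ℝ × ℝ =>
        ((1 + r.1 + r.2.1) ^ ((3:ℝ) / 2))⁻¹ * ((1 + r.2.1 + r.2.2) ^ ((3:ℝ) / 2))⁻¹ *
          ((Real.log (Real.exp 1 + r.1 + r.2.1) *
              Real.log (Real.exp 1 + r.2.1 + r.2.2)) ^ ξ)⁻¹)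
      (Set.Ici (0:ℝ) ×ˢ Set.Ici (0:ℝ) ×ˢ Set.Ici (0:ℝ)) volume := by
  have hξ0 : (0:ℝ) < ξ := by linarith
  constructor
  · apply reduce meas_f1
    · rintro ⟨a, b, c⟩ ⟨ha, hb, hc⟩
      have ha0 : (0:ℝ) ≤ a := ha
      have hb0 : (0:ℝ) ≤ b := hb
      have hc0 : (0:ℝ) ≤ c := hc
      have hL1 : (1:ℝ) ≤ Real.log (Real.exp 1 + a + b) := by
        rw [add_assoc]; exact log_ge_one (by linarith)
      have hL2 : (1:ℝ) ≤ Real.log (Real.exp 1 + b + c) := by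
        rw [add_assoc]; exact log_ge_one (by linarith)
      have hbase : (0:ℝ) ≤ 1 + a*b + a*c + b*c := by
        have := mul_nonneg ha0 hb0
        have := mul_nonneg ha0 hc0
        have := mul_nonneg hb0 hc0
        linarith
      exact mul_nonneg (inv_nonneg.mpr (Real.rpow_nonneg hbase _))
        (inv_nonneg.mpr (Real.rpow_nonneg (mul_nonneg (by linarith) (by linarith)) _))
    · exact hfin1_full hξ
  · apply reduce meas_f2
    · rintro ⟨a, b, c⟩ ⟨ha, hb, hc⟩
      have ha0 : (0:ℝ) ≤ a := ha
      have hb0 : (0:ℝ) ≤ b := hb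
      have hc0 : (0:ℝ) ≤ c := hc
      have hL1 : (1:ℝ) ≤ Real.log (Real.exp 1 + a + b) := by
        rw [add_assoc]; exact log_ge_one (by linarith)
      have hL2 : (1:ℝ) ≤ Real.log (Real.exp 1 + b + c) := by
        rw [add_assoc]; exact log_ge_one (by linarith)
      exact mul_nonneg (mul_nonneg (inv_nonneg.mpr (Real.rpow_nonneg (by linarith) _))
        (inv_nonneg.mpr (Real.rpow_nonneg (by linarith) _)))
        (inv_nonneg.mpr (Real.rpow_nonneg (mul_nonneg (by linarith) (by linarith)) _))
    · exact hfin2 hξ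
end
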